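/- arXiv:math/0102045 — 7 statements merged into one kernel-verified Lean document; each statement's English description precedes it below -/
import Mathlib

section
/- If I is an ideal over a set A with non(I) = cof(I), then every I-positive subset X of A can be partitioned into non(I) many pairwise disjoint I-positive sets. -/
open Cardinal Set Ordinal

/-- `non(I)`: the least cardinality of an `I`-positive subset of `A`. -/
noncomputable def idealNon {A : Type*} (I : Set (Set A)) : Cardinal :=
  sInf {c | ∃ X : Set A, X ∉ I ∧ #X = c}

/-- `cof(I)`: the least cardinality of a subfamily of `I` cofinal in `I` under inclusion. -/
noncomputable def idealCof {A : Type*} (I : Set (Set A)) : Cardinal :=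
  sInf {c | ∃ J : Set (Set A), J ⊆ I ∧ #J = c ∧ ∀ X ∈ I, ∃ Y ∈ J, X ⊆ Y}

lemma sdr_aux {A : Type*} (κ : Cardinal) (S : κ.ord.ToType → Set A)
    (hS : ∀ i, κ ≤ #(S i)) :
    ∃ f : κ.ord.ToType → A, Function.Injective f ∧ ∀ i, f i ∈ S i := by
  classical
  have key : ∀ i : κ.ord.ToType, ∀ g : {y // y < i} → A,
      (S i \ Set.range g).Nonempty := by
    haveI : IsWellOrder κ.ord.ToType ((· < ·) : κ.ord.ToType → κ.ord.ToType → Prop) :=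
      isWellOrder_lt
    intro i g
    rw [Set.nonempty_iff_ne_empty]
    intro h
    have hsub : S i ⊆ Set.range g := by rwa [← Set.diff_eq_empty]
    have h1 : #(S i) ≤ #{y // y < i} :=
      (Cardinal.mk_le_mk_of_subset hsub).trans (Cardinal.mk_range_le)
    have h2 : #{y // y < i} < κ := by
      rw [← Ordinal.card_typein (r := ((· < ·) : κ.ord.ToType → κ.ord.ToType → Prop)) i]
      exact Cardinal.lt_ord.mp (by
        have := Ordinal.typein_lt_type ((· < ·) : κ.ord.ToType → κ.ord.ToType → Prop) i
        rwa [Ordinal.type_toType] at this)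
    exact absurd (hS i) (not_le.mpr (lt_of_le_of_lt h1 h2))
  have wf : WellFounded ((· < ·) : κ.ord.ToType → κ.ord.ToType → Prop) :=
    (isWellOrder_lt (α := κ.ord.ToType)).wf
  set f : κ.ord.ToType → A :=
    wf.fix (fun i IH => (key i (fun y : {y // y < i} => IH y y.2)).some) with hfdef
  have hfix : ∀ i, f i = (key i (fun y : {y // y < i} => f y)).some := fun i =>
    wf.fix_eq _ i
  have hmem : ∀ i, f i ∈ S i \ Set.range (fun y : {y // y < i} => f y.1) := by
    intro i
    rw [hfix i]
    exact Set.Nonempty.some_mem _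
  refine ⟨f, ?_, fun i => (hmem i).1⟩
  intro i j hij
  by_contra hne
  rcases lt_or_gt_of_ne hne with h | h
  · exact (hmem j).2 ⟨⟨i, h⟩, hij⟩
  · exact (hmem i).2 ⟨⟨j, h⟩, hij.symm⟩

/-- If `I` is a (proper, containing all singletons) ideal over a set `A` with
`non(I) = cof(I)`, then every `I`-positive `X ⊆ A` can be partitioned into
`non(I)` many pairwise disjoint `I`-positive sets. -/
theorem stmt0 {A : Type*} (I : Set (Set A))
    (hlower : ∀ X ∈ I, ∀ Y : Set A, Y ⊆ X → Y ∈ I)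
    (hunion : ∀ X ∈ I, ∀ Y ∈ I, X ∪ Y ∈ I)
    (hproper : (Set.univ : Set A) ∉ I)
    (hsingle : ∀ a : A, ({a} : Set A) ∈ I)
    (hnoncof : idealNon I = idealCof I)
    (X : Set A) (hX : X ∉ I) :
    ∃ P : Set (Set A), #P = idealNon I ∧ (∀ Y ∈ P, Y ∉ I) ∧
      P.PairwiseDisjoint id ∧ ⋃₀ P = X := by
  classical
  obtain hA | hA := isEmpty_or_nonempty A
  · -- degenerate case: `A` empty
    have hne : (∅ : Set A) ∉ I := by rwa [← Set.univ_eq_empty_iff.mpr hA]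
    have h0 : idealNon I = 0 := le_antisymm (csInf_le' ⟨∅, hne, by simp⟩) zero_le
    refine ⟨∅, by simp [h0], by simp, Set.pairwiseDisjoint_empty, ?_⟩
    simp [Set.eq_empty_of_isEmpty X]
  -- main case
  have hpos : ∀ Z : Set A, Z ∉ I → idealNon I ≤ #Z := fun Z hZ => csInf_le' ⟨Z, hZ, rfl⟩
  have hne1 : {c | ∃ X : Set A, X ∉ I ∧ #X = c}.Nonempty :=
    ⟨#(Set.univ : Set A), Set.univ, hproper, rfl⟩
  obtain ⟨X₀, hX₀, hX₀card⟩ := csInf_mem hne1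
  have hempty : (∅ : Set A) ∈ I := by
    obtain ⟨a⟩ := hA
    exact hlower _ (hsingle a) _ (Set.empty_subset _)
  have hfinI : ∀ Z : Set A, Z.Finite → Z ∈ I := by
    intro Z hZ
    refine Set.Finite.induction_on (motive := fun s _ => s ∈ I) Z hZ hempty ?_
    intro a s _ _ hs
    rw [Set.insert_eq]
    exact hunion _ (hsingle a) _ hs
  have hX₀card' : idealNon I = #↑X₀ := hX₀card.symm
  have hκinf : ℵ₀ ≤ idealNon I := by
    rw [hX₀card']
    by_contra hlt
    exact hX₀ (hfinI X₀ (Cardinal.lt_aleph0_iff_set_finite.mp (not_le.mp hlt)))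
  have hκ0 : idealNon I ≠ 0 := (aleph0_pos.trans_le hκinf).ne'
  -- a cofinal family of size `cof(I) = non(I)`
  have hne2 : {c | ∃ J : Set (Set A), J ⊆ I ∧ #J = c ∧ ∀ X ∈ I, ∃ Y ∈ J, X ⊆ Y}.Nonempty :=
    ⟨#I, I, subset_rfl, rfl, fun X hX => ⟨X, hX, subset_rfl⟩⟩
  obtain ⟨J, hJI, hJcard, hJcof⟩ := csInf_mem hne2
  have hJκ : #↥J = idealNon I := by rw [hJcard]; exact hnoncof.symm
  -- `X \ Y` is positive for `Y ∈ J`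
  have hdiff : ∀ Y ∈ J, X \ Y ∉ I := by
    intro Y hY hmem
    refine hX (hlower _ (hunion _ hmem _ (hJI hY)) _ ?_)
    intro x hx
    by_cases hxY : x ∈ Y
    · exact Or.inr hxY
    · exact Or.inl ⟨hx, hxY⟩
  -- index type of size `non(I)`
  have hι : #(idealNon I).ord.ToType = idealNon I := by
    rw [Cardinal.mk_toType, Cardinal.card_ord]
  have hιne : Nonempty (idealNon I).ord.ToType :=
    Cardinal.mk_ne_zero_iff.mp (by rw [hι]; exact hκ0)
  have hJne : Nonempty ↥J := Cardinal.mk_ne_zero_iff.mp (by rw [hJκ]; exact hκ0)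
  have hprod : #((idealNon I).ord.ToType × ↥J) = #(idealNon I).ord.ToType := by
    rw [Cardinal.mk_prod, Cardinal.lift_id, Cardinal.lift_id, hι, hJκ]
    exact Cardinal.mul_eq_self hκinf
  obtain ⟨e⟩ := Cardinal.eq.mp hprod.symm
  -- choose distinct representatives
  obtain ⟨f, hfinj, hfmem⟩ := sdr_aux (idealNon I)
    (fun i => X \ ((e i).2 : Set A))
    (fun i => hpos _ (hdiff _ (e i).2.2))
  set g : (idealNon I).ord.ToType × ↥J → A := fun p => f (e.symm p) with hgdef
  have hginj : Function.Injective g := hfinj.comp e.symm.injective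
  have hgmem : ∀ p, g p ∈ X \ (p.2 : Set A) := by
    intro p
    have := hfmem (e.symm p)
    rwa [e.apply_symm_apply] at this
  set Z : (idealNon I).ord.ToType → Set A :=
    fun i => Set.range fun y : ↥J => g (i, y) with hZdef
  have hZsub : ∀ i, Z i ⊆ X := by
    rintro i x ⟨y, rfl⟩
    exact (hgmem (i, y)).1
  have hZpos : ∀ i, Z i ∉ I := by
    intro i hZI
    obtain ⟨Y, hYJ, hsub⟩ := hJcof _ hZI
    exact (hgmem (i, ⟨Y, hYJ⟩)).2 (hsub ⟨⟨Y, hYJ⟩, rfl⟩)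
  have hZdisj : ∀ i j, i ≠ j → Disjoint (Z i) (Z j) := by
    intro i j hij
    rw [Set.disjoint_left]
    rintro x ⟨y, rfl⟩ ⟨y', hy'⟩
    exact hij (congrArg Prod.fst (hginj hy')).symm
  set R : Set A := X \ ⋃ i, Z i with hRdef
  have hRZ : ∀ k, Disjoint R (Z k) := by
    intro k
    rw [Set.disjoint_left]
    intro x hx hxk
    exact hx.2 (Set.mem_iUnion.mpr ⟨k, hxk⟩)
  obtain ⟨i₀⟩ := hιne
  set F : (idealNon I).ord.ToType → Set A :=
    fun i => if i = i₀ then Z i ∪ R else Z i with hFdef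
  have hZF : ∀ i, Z i ⊆ F i := by
    intro i
    by_cases hi : i = i₀ <;> simp [hFdef, hi]
  have hFsub : ∀ i, F i ⊆ X := by
    intro i
    by_cases hi : i = i₀
    · simp only [hFdef, if_pos hi]
      exact Set.union_subset (hZsub i) Set.diff_subset
    · simp only [hFdef, if_neg hi]
      exact hZsub i
  have hFne : ∀ i, (F i).Nonempty := by
    intro i
    obtain ⟨y₀⟩ := hJne
    exact ⟨g (i, y₀), hZF i ⟨y₀, rfl⟩⟩
  have hFdisj : ∀ i j, i ≠ j → Disjoint (F i) (F j) := by
    intro i j hij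
    by_cases hi : i = i₀ <;> by_cases hj : j = i₀
    · exact absurd (hi.trans hj.symm) hij
    · subst hi
      simp only [hFdef, if_pos rfl, if_neg hj]
      exact Set.disjoint_union_left.mpr ⟨hZdisj _ _ hij, hRZ j⟩
    · subst hj
      simp only [hFdef, if_neg hi, if_pos rfl]
      exact (Set.disjoint_union_left.mpr ⟨hZdisj _ _ hij.symm, hRZ i⟩).symm
    · simp only [hFdef, if_neg hi, if_neg hj]
      exact hZdisj _ _ hij
  have hFinj : Function.Injective F := by
    intro i j hFij
    by_contra hij
    have hd := hFdisj i j hij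
    rw [hFij] at hd
    exact (hFne j).ne_empty (by simpa using disjoint_self.mp hd)
  refine ⟨Set.range F, ?_, ?_, ?_, ?_⟩
  · rw [Cardinal.mk_range_eq _ hFinj, hι]
  · rintro Y ⟨i, rfl⟩ hYI
    exact hZpos i (hlower _ hYI _ (hZF i))
  · rintro a ⟨i, rfl⟩ b ⟨j, rfl⟩ hab
    exact hFdisj i j fun hijeq => hab (congrArg F hijeq)
  · rw [Set.sUnion_range]
    apply Set.Subset.antisymm
    · exact Set.iUnion_subset hFsub
    · intro x hx
      by_cases hxU : x ∈ ⋃ i, Z i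
      · obtain ⟨i, hi⟩ := Set.mem_iUnion.mp hxU
        exact Set.mem_iUnion.mpr ⟨i, hZF i hi⟩
      · refine Set.mem_iUnion.mpr ⟨i₀, ?_⟩
        simp only [hFdef, if_pos rfl]
        exact Or.inr ⟨hx, hxU⟩
end

section
/- If I is an ideal over a set A with non(I) = cof(I), then for every I-positive set X, the player Empty has a winning strategy in the ideal game G(I|X); consequently I is nowhere precipitous. -/
open Cardinal Set

/-- The restricted ideal `I|X`, generated by `I` together with the complement of `X`:
for an ideal `I` this is `{Z | Z ∩ X ∈ I}`. -/
def idealRestrict {A : Type*} (I : Set (Set A)) (X : Set A) : Set (Set A) :=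
  {Z | Z ∩ X ∈ I}

/-- The history of Nonempty's moves `X 0, …, X n`. -/
def gameHist {A : Type*} (X : ℕ → Set A) (n : ℕ) : List (Set A) :=
  (List.range (n + 1)).map X

/-- `σ` is a winning strategy for the player Empty in the ideal game `G(J)`:
Nonempty and Empty alternately choose `J`-positive sets
`X₁ ⊇ Y₁ ⊇ X₂ ⊇ Y₂ ⊇ ⋯`; Empty (playing `Yₙ = σ ⟨X₁,…,Xₙ⟩`) always answers a legal
position with a `J`-positive subset, and for every infinite run following `σ`
the intersection of the moves is empty, i.e. Empty wins. -/
def IsWinningForEmpty {A : Type*} (J : Set (Set A)) (σ : List (Set A) → Set A) : Prop :=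
  (∀ X : ℕ → Set A, ∀ n : ℕ,
      (∀ m ≤ n, X m ∉ J) →
      (∀ m < n, X (m + 1) ⊆ σ (gameHist X m)) →
      σ (gameHist X n) ⊆ X n ∧ σ (gameHist X n) ∉ J) ∧
  (∀ X : ℕ → Set A,
      (∀ n, X n ∉ J) →
      (∀ n, X (n + 1) ⊆ σ (gameHist X n)) →
      (⋂ n, X n) = ∅)

/-- If `I` is an ideal over `A` with `non(I) = cof(I)`, then for every `I`-positive `X`
Empty has a winning strategy in the game `G(I|X)`; consequently (by the
Galvin–Jech–Magidor characterization) `I` is nowhere precipitous. -/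
theorem stmt1 {A : Type*} (I : Set (Set A))
    (hlower : ∀ X ∈ I, ∀ Y : Set A, Y ⊆ X → Y ∈ I)
    (hunion : ∀ X ∈ I, ∀ Y ∈ I, X ∪ Y ∈ I)
    (hproper : (Set.univ : Set A) ∉ I)
    (hsingle : ∀ a : A, ({a} : Set A) ∈ I)
    (hnoncof : idealNon I = idealCof I) :
    ∀ X : Set A, X ∉ I →
      ∃ σ : List (Set A) → Set A, IsWinningForEmpty (idealRestrict I X) σ := by
  classical
  intro X hX
  by_cases hA : IsEmpty A
  · refine ⟨fun _ => ∅, fun Xs n _ _ => ⟨empty_subset _, ?_⟩, fun Xs _ _ => ?_⟩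
    · intro hmem
      have h1 : (∅ : Set A) ∩ X ∈ I := hmem
      rw [Set.empty_inter] at h1
      exact hproper ((Set.eq_empty_of_isEmpty (Set.univ : Set A)) ▸ h1)
    · exact Set.eq_empty_of_isEmpty _
  rw [not_isEmpty_iff] at hA
  obtain ⟨a₀⟩ := hA
  set J : Set (Set A) := idealRestrict I X with hJ
  have memJ : ∀ Z : Set A, Z ∈ J ↔ Z ∩ X ∈ I := fun Z => Iff.rfl
  have hEmptyI : (∅ : Set A) ∈ I := hlower _ (hsingle a₀) _ (empty_subset _)
  have hJlower : ∀ B ∈ J, ∀ C : Set A, C ⊆ B → C ∈ J := by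
    intro B hB C hCB
    exact (memJ C).2 (hlower _ ((memJ B).1 hB) _ (inter_subset_inter_left X hCB))
  have hJunion : ∀ B ∈ J, ∀ C ∈ J, B ∪ C ∈ J := by
    intro B hB C hC
    refine (memJ _).2 ?_
    rw [union_inter_distrib_right]
    exact hunion _ ((memJ B).1 hB) _ ((memJ C).1 hC)
  have hJempty : (∅ : Set A) ∈ J := (memJ _).2 (by rw [Set.empty_inter]; exact hEmptyI)
  have hdiff : ∀ S : Set A, S ∉ J → ∀ W ∈ J, S \ W ∉ J := by
    intro S hS W hW hSW
    refine hS (hJlower _ (hJunion _ hSW _ hW) _ ?_)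
    intro a ha
    by_cases h : a ∈ W
    · exact Or.inr h
    · exact Or.inl ⟨ha, h⟩
  set κ := idealNon I with hκdef
  have hfinI : ∀ T : Set A, T.Finite → T ∈ I := by
    intro T hT
    refine Set.Finite.induction_on (motive := fun s _ => s ∈ I) T hT hEmptyI ?_
    intro a s _ _ ih
    rw [Set.insert_eq]
    exact hunion _ (hsingle _) _ ih
  have hκinf : ℵ₀ ≤ κ := by
    refine le_csInf ⟨#(Set.univ : Set A), Set.univ, hproper, rfl⟩ ?_
    rintro c ⟨T, hT, rfl⟩
    rw [aleph0_le_mk_iff, Set.infinite_coe_iff]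
    exact fun hfin => hT (hfinI T hfin)
  have hsmallI : ∀ T : Set A, #T < κ → T ∈ I := by
    intro T hT
    by_contra h
    have hle : idealNon I ≤ #T := csInf_le' ⟨T, h, rfl⟩
    exact absurd hle (not_le.2 hT)
  have hsmallJ : ∀ T : Set A, #T < κ → T ∈ J := by
    intro T h
    exact (memJ T).2 (hsmallI _ (lt_of_le_of_lt
      (mk_le_mk_of_subset Set.inter_subset_left) h))
  have hcofne : {c | ∃ J' : Set (Set A), J' ⊆ I ∧ #J' = c ∧ ∀ Y ∈ I, ∃ Z ∈ J', Y ⊆ Z}.Nonempty :=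
    ⟨#I, I, subset_rfl, rfl, fun Y hY => ⟨Y, hY, subset_rfl⟩⟩
  obtain ⟨J₀, hJ₀I, hJ₀c, hJ₀cof⟩ := csInf_mem hcofne
  have hJ₀κ : #J₀ = κ := by
    rw [hJ₀c, hnoncof]; rfl
  obtain ⟨eqv⟩ : Nonempty ((Cardinal.ord κ).ToType ≃ ↥J₀) := by
    rw [← Cardinal.eq, Cardinal.mk_toType, Cardinal.card_ord, hJ₀κ]
  have hlim := Cardinal.isSuccLimit_ord hκinf
  haveI hwo : IsWellOrder (Cardinal.ord κ).ToType (· < ·) := isWellOrder_lt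
  let tpn : (Cardinal.ord κ).ToType → Ordinal := fun i => Ordinal.typein (α := (Cardinal.ord κ).ToType) (· < ·) i
  have htpn_lt : ∀ i, tpn i < Cardinal.ord κ := fun i => Ordinal.typein_lt_self i
  let slick : (A → Ordinal) → Set A → Prop :=
    fun h T => ∀ o : Ordinal, o < Cardinal.ord κ → {a ∈ T | h a < o} ∈ J
  have hslickMono : ∀ (h : A → Ordinal) (T T' : Set A), T' ⊆ T → slick h T → slick h T' := by
    intro h T T' hsub hs o ho
    exact hJlower _ (hs o ho) _ (fun a ha => ⟨hsub ha.1, ha.2⟩)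
  have hslickTop : ∀ x : Set A, slick (fun _ => Cardinal.ord κ) x := by
    intro x o ho
    have he : {a ∈ x | (fun _ : A => Cardinal.ord κ) a < o} = ∅ := by
      ext a
      simp only [Set.mem_sep_iff, Set.mem_empty_iff_false, iff_false, not_and]
      exact fun _ h2 => absurd (ho.trans h2) (lt_irrefl _)
    rw [he]; exact hJempty
  -- the key one-step construction
  have step : ∀ (x : Set A) (prev : A → Ordinal), ∃ s : Set A × (A → Ordinal),
      x ∉ J → slick prev x →
        (s.1 ⊆ x ∧ s.1 ∉ J ∧ slick s.2 s.1 ∧ ∀ a ∈ s.1, s.2 a < prev a) := by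
    intro x prev
    by_cases hc : x ∉ J ∧ slick prev x
    case neg => exact ⟨(∅, fun _ => 0), fun h1 h2 => absurd ⟨h1, h2⟩ hc⟩
    obtain ⟨hx, hsl⟩ := hc
    have hpick : ∀ i : (Cardinal.ord κ).ToType, ∃ a, a ∈ x ∧ a ∈ X ∧
        a ∉ (↑(eqv i) : Set A) ∧ ¬ (prev a < Order.succ (Order.succ (tpn i))) := by
      intro i
      have hV : ((↑(eqv i) : Set A) ∪ Xᶜ) ∈ J := by
        refine (memJ _).2 (hlower _ (hJ₀I (eqv i).2) _ ?_)
        rintro a ⟨h1, h2⟩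
        rcases h1 with h1 | h1
        · exact h1
        · exact absurd h2 h1
      have hL : {a ∈ x | prev a < Order.succ (Order.succ (tpn i))} ∈ J :=
        hsl _ (hlim.succ_lt (hlim.succ_lt (htpn_lt i)))
      have hW : x \ ((((↑(eqv i) : Set A) ∪ Xᶜ)) ∪
          {a ∈ x | prev a < Order.succ (Order.succ (tpn i))}) ∉ J :=
        hdiff _ hx _ (hJunion _ hV _ hL)
      have hWne : (x \ ((((↑(eqv i) : Set A) ∪ Xᶜ)) ∪
          {a ∈ x | prev a < Order.succ (Order.succ (tpn i))})).Nonempty :=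
        Set.nonempty_iff_ne_empty.2 (fun h => hW (h ▸ hJempty))
      obtain ⟨a, ha1, ha2⟩ := hWne
      refine ⟨a, ha1, ?_, ?_, ?_⟩
      · by_contra h
        exact ha2 (Or.inl (Or.inr h))
      · intro h
        exact ha2 (Or.inl (Or.inl h))
      · intro h
        exact ha2 (Or.inr ⟨ha1, h⟩)
    choose f hf1 hf2 hf3 hf4 using hpick
    let h' : A → Ordinal := fun a =>
      if h : a ∈ Set.range f then Order.succ (tpn (Set.mem_range.mp h).choose) else 0
    have hval : ∀ a (h : a ∈ Set.range f),
        h' a = Order.succ (tpn (Set.mem_range.mp h).choose) := by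
      intro a h
      exact dif_pos h
    have hspec : ∀ a (h : a ∈ Set.range f), f (Set.mem_range.mp h).choose = a :=
      fun a h => (Set.mem_range.mp h).choose_spec
    refine ⟨(Set.range f, h'), fun _ _ => ⟨?_, ?_, ?_, ?_⟩⟩
    · rintro a ⟨i, rfl⟩
      exact hf1 i
    · intro hmem
      obtain ⟨Z₀, hZ₀, hsub⟩ := hJ₀cof _ ((memJ _).1 hmem)
      obtain ⟨i, hi⟩ := eqv.surjective ⟨Z₀, hZ₀⟩
      refine hf3 i ?_
      have h2 : f i ∈ Z₀ := hsub ⟨Set.mem_range_self i, hf2 i⟩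
      rw [hi]
      exact h2
    · -- slickness of the new labelling
      intro o ho
      obtain ⟨i₀, hi₀⟩ := Ordinal.typein_surj (α := (Cardinal.ord κ).ToType) (· < ·)
        (show o < Ordinal.type (α := (Cardinal.ord κ).ToType) (· < ·) by
          rw [Ordinal.type_toType]; exact ho)
      have hsub : {a ∈ Set.range f | h' a < o} ⊆ f '' (Set.Iio i₀) := by
        rintro a ⟨hmem, hlt⟩
        refine ⟨(Set.mem_range.mp hmem).choose, ?_, hspec a hmem⟩
        rw [hval a hmem] at hlt
        have h1 : tpn (Set.mem_range.mp hmem).choose < o :=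
          (Order.lt_succ _).trans hlt
        rw [← hi₀] at h1
        exact (Ordinal.typein_lt_typein (· < ·)).1 h1
      refine hsmallJ _ (lt_of_le_of_lt ?_ (Cardinal.mk_Iio_ord_toType i₀))
      exact (mk_le_mk_of_subset hsub).trans (mk_image_le)
    · -- descent
      rintro a ⟨i, rfl⟩
      have hm : f i ∈ Set.range f := Set.mem_range_self i
      show h' (f i) < prev (f i)
      rw [hval _ hm]
      have h4 := hf4 (Set.mem_range.mp hm).choose
      rw [hspec _ hm] at h4
      exact lt_of_lt_of_le (Order.succ_lt_succ (Order.lt_succ _)) (not_lt.1 h4)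
  choose stepF stepSpec using step
  set F : Set A → (Set A × (A → Ordinal)) → (Set A × (A → Ordinal)) :=
    fun x st => stepF x st.2 with hFdef
  set init : Set A × (A → Ordinal) := ((∅ : Set A), fun _ : A => Cardinal.ord κ) with hinit
  have hgh0 : ∀ Xs : ℕ → Set A, gameHist Xs 0 = [Xs 0] := by
    intro Xs; rfl
  have hhist : ∀ (Xs : ℕ → Set A) (n : ℕ),
      (gameHist Xs (n+1)).reverse = Xs (n+1) :: (gameHist Xs n).reverse := by
    intro Xs n
    simp [gameHist, List.range_succ]
  have heq0 : ∀ Xs : ℕ → Set A,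
      List.foldr F init (gameHist Xs 0).reverse = stepF (Xs 0) (fun _ => Cardinal.ord κ) := by
    intro Xs
    rw [hgh0 Xs]
    rfl
  have heqS : ∀ (Xs : ℕ → Set A) (n : ℕ),
      List.foldr F init (gameHist Xs (n+1)).reverse
        = stepF (Xs (n+1)) (List.foldr F init (gameHist Xs n).reverse).2 := by
    intro Xs n
    rw [hhist Xs n]
    rfl
  have main : ∀ (Xs : ℕ → Set A) (n : ℕ),
      (∀ m, m ≤ n → Xs m ∉ J) →
      (∀ m, m < n → Xs (m+1) ⊆ (List.foldr F init (gameHist Xs m).reverse).1) →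
      (List.foldr F init (gameHist Xs n).reverse).1 ⊆ Xs n ∧
      (List.foldr F init (gameHist Xs n).reverse).1 ∉ J ∧
      slick (List.foldr F init (gameHist Xs n).reverse).2
        (List.foldr F init (gameHist Xs n).reverse).1 := by
    intro Xs n
    induction n with
    | zero =>
      intro h1 _
      rw [heq0 Xs]
      have hs := stepSpec (Xs 0) (fun _ => Cardinal.ord κ) (h1 0 le_rfl) (hslickTop _)
      exact ⟨hs.1, hs.2.1, hs.2.2.1⟩
    | succ n ih =>
      intro h1 h2
      have IH := ih (fun m hm => h1 m (Nat.le_succ_of_le hm)) (fun m hm => h2 m (Nat.lt_succ_of_lt hm))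
      have hsubX : Xs (n+1) ⊆ (List.foldr F init (gameHist Xs n).reverse).1 :=
        h2 n (Nat.lt_succ_self n)
      have hs := stepSpec (Xs (n+1)) (List.foldr F init (gameHist Xs n).reverse).2
        (h1 (n+1) le_rfl) (hslickMono _ _ _ hsubX IH.2.2)
      rw [heqS Xs n]
      exact ⟨hs.1, hs.2.1, hs.2.2.1⟩
  refine ⟨fun l => (List.foldr F init l.reverse).1, ?_, ?_⟩
  · intro Xs n h1 h2
    have h := main Xs n h1 h2
    exact ⟨h.1, h.2.1⟩
  · intro Xs h1 h2
    have hInv := fun n => main Xs n (fun m _ => h1 m) (fun m _ => h2 m)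
    have hDes : ∀ n, ∀ a ∈ (List.foldr F init (gameHist Xs (n+1)).reverse).1,
        (List.foldr F init (gameHist Xs (n+1)).reverse).2 a
          < (List.foldr F init (gameHist Xs n).reverse).2 a := by
      intro n
      have hs := stepSpec (Xs (n+1)) (List.foldr F init (gameHist Xs n).reverse).2
        (h1 (n+1)) (hslickMono _ _ _ (h2 n) (hInv n).2.2)
      rw [heqS Xs n]
      exact hs.2.2.2
    rw [Set.eq_empty_iff_forall_notMem]
    intro a ha
    have haX : ∀ n, a ∈ Xs n := fun n => Set.mem_iInter.1 ha n
    have haS : ∀ n, a ∈ (List.foldr F init (gameHist Xs n).reverse).1 :=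
      fun n => h2 n (haX (n+1))
    have hdec : ∀ n, (List.foldr F init (gameHist Xs (n+1)).reverse).2 a
        < (List.foldr F init (gameHist Xs n).reverse).2 a :=
      fun n => hDes n a (haS (n+1))
    set g : ℕ → Ordinal := fun n => (List.foldr F init (gameHist Xs n).reverse).2 a with hgdef
    have hne : (Set.range g).Nonempty := ⟨g 0, 0, rfl⟩
    obtain ⟨k, hk⟩ := Ordinal.lt_wf.min_mem (Set.range g) hne
    have hlt2 : g (k+1) < Ordinal.lt_wf.min (Set.range g) hne := by
      rw [← hk]; exact hdec k
    exact Ordinal.lt_wf.not_lt_min (Set.range g) ⟨k+1, rfl⟩ hlt2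
end

section
/- Let κ be a regular uncountable cardinal and λ ≥ κ a cardinal with 2^{<κ} < λ^{<κ} = 2^λ. Then every unbounded subset of P_κ(λ) has cardinality 2^λ. -/
open Cardinal Set

/-- The ordinal corresponding to an element of the canonical type `o.ToType` of
order type `o`. -/
noncomputable def ordAt {o : Ordinal} (x : o.ToType) : Ordinal :=
  ((Ordinal.ToType.mk (o := o)).symm x : Set.Iio o).1

/-- `P_κ(λ)`, realized as the collection of subsets of the canonical type of order
type `o` (for `o = λ.ord`) of cardinality `< κ`. -/
def Pkl (κ : Cardinal) (o : Ordinal) : Set (Set o.ToType) := {s | #s < κ}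

/-- Club subsets of `(P_κ(λ), ⊆)`: subfamilies of `P_κ(λ)` closed under unions of
`⊆`-increasing chains of length `< κ` and cofinal in `(P_κ(λ), ⊆)`. -/
def IsClubK (κ : Cardinal) (o : Ordinal) (C : Set (Set o.ToType)) : Prop :=
  C ⊆ Pkl κ o ∧
  (∀ D : Set (Set o.ToType),
      D ⊆ C → D.Nonempty → IsChain (· ⊆ ·) D → #D < κ → ⋃₀ D ∈ C) ∧
  (∀ s ∈ Pkl κ o, ∃ t ∈ C, s ⊆ t)

/-- Stationary subsets of `P_κ(λ)`: sets meeting every club. -/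
def IsStatK (κ : Cardinal) (o : Ordinal) (X : Set (Set o.ToType)) : Prop :=
  ∀ C, IsClubK κ o C → (X ∩ C).Nonempty

/-- Auxiliary: `lam ^< κ ≤ #(Pkl κ lam.ord)`. -/
theorem powerlt_le_mk_Pkl (κ lam : Cardinal) (hunc : ℵ₀ < κ) (hkl : κ ≤ lam) :
    lam ^< κ ≤ #(Pkl κ lam.ord) := by
  have hmkα : #lam.ord.ToType = lam := by rw [Cardinal.mk_toType, Cardinal.card_ord]
  rw [Cardinal.powerlt_le]
  intro μ hμκ
  have hμlam : μ ≤ lam := le_of_lt (lt_of_lt_of_le hμκ hkl)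
  have hlaminf : ℵ₀ ≤ lam := le_of_lt (lt_of_lt_of_le hunc hkl)
  have hprod : #(μ.out × lam.ord.ToType) ≤ #lam.ord.ToType := by
    rw [Cardinal.mk_prod, Cardinal.lift_id, Cardinal.lift_id, Cardinal.mk_out, hmkα]
    calc μ * lam ≤ lam * lam := mul_le_mul_left hμlam lam
      _ = lam := Cardinal.mul_eq_self hlaminf
  obtain ⟨e⟩ := Cardinal.le_def _ _ |>.mp hprod
  have hpow : lam ^ μ = #(μ.out → lam.ord.ToType) := by
    rw [← Cardinal.power_def, hmkα, Cardinal.mk_out]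
  rw [hpow, Cardinal.le_def]
  refine ⟨⟨fun f => ⟨Set.range (fun b => e (b, f b)), ?_⟩, ?_⟩⟩
  · show #(Set.range (fun b => e (b, f b))) < κ
    calc #(Set.range (fun b => e (b, f b))) ≤ #μ.out := Cardinal.mk_range_le
      _ = μ := Cardinal.mk_out μ
      _ < κ := hμκ
  · intro f g hfg
    funext b
    have hfg' : Set.range (fun b => e (b, f b)) = Set.range (fun b => e (b, g b)) :=
      congrArg Subtype.val hfg
    have hb : e (b, f b) ∈ Set.range (fun b => e (b, g b)) := by
      rw [← hfg']; exact ⟨b, rfl⟩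
    obtain ⟨b', hb'⟩ := hb
    have hpair : (b', g b') = (b, f b) := e.injective hb'
    obtain ⟨h1, h2⟩ := Prod.ext_iff.mp hpair
    subst h1
    exact h2.symm

/-- Let `κ` be regular uncountable and `λ ≥ κ` with `2^{<κ} < λ^{<κ} = 2^λ`.
Then every unbounded subset of `P_κ(λ)` has cardinality `2^λ`. -/
theorem stmt2 (κ lam : Cardinal) (hreg : κ.IsRegular) (hunc : ℵ₀ < κ)
    (hkl : κ ≤ lam) (h1 : (2 : Cardinal) ^< κ < lam ^< κ) (h2 : lam ^< κ = 2 ^ lam)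
    (X : Set (Set lam.ord.ToType)) (hX : X ⊆ Pkl κ lam.ord)
    (hub : ∀ s ∈ Pkl κ lam.ord, ∃ t ∈ X, s ⊆ t) :
    #X = 2 ^ lam := by
  have hmkα : #lam.ord.ToType = lam := by rw [Cardinal.mk_toType, Cardinal.card_ord]
  have hlaminf : ℵ₀ ≤ lam := le_of_lt (lt_of_lt_of_le hunc hkl)
  -- upper bound
  have hub' : #X ≤ 2 ^ lam := by
    have : #X ≤ #(Set lam.ord.ToType) := Cardinal.mk_set_le X
    rwa [Cardinal.mk_set, hmkα] at this
  -- lower bound: Pkl injects into Σ t : X, Set ↥t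
  have hchoice : ∀ s : Pkl κ lam.ord, ∃ t ∈ X, (s : Set lam.ord.ToType) ⊆ t :=
    fun s => hub s s.2
  choose T hT hsub using hchoice
  have hinj : #(Pkl κ lam.ord) ≤
      Cardinal.sum (fun t : X => #(Set (↥(t : Set lam.ord.ToType)))) := by
    rw [← Cardinal.mk_sigma, Cardinal.le_def]
    let G : (Σ t : X, Set (↥(t : Set lam.ord.ToType))) → Set lam.ord.ToType :=
      fun p => Subtype.val '' p.2
    have hleft : ∀ s : Pkl κ lam.ord,
        (Subtype.val '' (Subtype.val ⁻¹' (s : Set lam.ord.ToType) : Set (↥(T s)))) =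
          (s : Set lam.ord.ToType) := by
      intro s
      rw [Set.image_preimage_eq_inter_range, Subtype.range_coe]
      exact Set.inter_eq_left.mpr (hsub s)
    refine ⟨⟨fun s => ⟨⟨T s, hT s⟩, Subtype.val ⁻¹' (s : Set lam.ord.ToType)⟩, ?_⟩⟩
    intro s₁ s₂ h
    exact Subtype.ext ((hleft s₁).symm.trans ((congrArg G h).trans (hleft s₂)))
  have hsum : Cardinal.sum (fun t : X => #(Set (↥(t : Set lam.ord.ToType)))) ≤
      #X * (2 ^< κ) := by
    calc Cardinal.sum (fun t : X => #(Set (↥(t : Set lam.ord.ToType))))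
        ≤ Cardinal.sum (fun _ : X => (2 ^< κ : Cardinal)) := by
          apply Cardinal.sum_le_sum
          intro t
          rw [Cardinal.mk_set]
          exact Cardinal.le_powerlt 2 (hX t.2)
      _ = #X * (2 ^< κ) := Cardinal.sum_const' _ _
  -- conclude
  by_contra hne
  have hlt : #X < 2 ^ lam := lt_of_le_of_ne hub' hne
  have h2inf : ℵ₀ ≤ (2 ^ lam : Cardinal) := hlaminf.trans (Cardinal.cantor lam).le
  have hlt2 : (2 : Cardinal) ^< κ < 2 ^ lam := h2 ▸ h1
  have hsmall : #(Pkl κ lam.ord) < 2 ^ lam :=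
    lt_of_le_of_lt (hinj.trans hsum) (Cardinal.mul_lt_of_lt h2inf hlt hlt2)
  have hge : (2 : Cardinal) ^ lam ≤ #(Pkl κ lam.ord) :=
    h2 ▸ powerlt_le_mk_Pkl κ lam hunc hkl
  exact absurd hge (not_le.mpr hsmall)
end

section
/- Let κ be a regular uncountable cardinal and λ ≥ κ with 2^{<κ} < λ^{<κ} = 2^λ. Then every stationary subset of P_κ(λ) can be partitioned into 2^λ pairwise disjoint stationary sets. -/
open Cardinal Set

namespace Stmt3Aux

universe u

variable {κ : Cardinal.{u}} {o : Ordinal.{u}}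

/-- A union of fewer than `κ` sets each of size `< κ` has size `< κ`. -/
theorem small_sUnion (hreg : κ.IsRegular) {D : Set (Set o.ToType)} (hD : #D < κ)
    (h : ∀ d ∈ D, #(d : Set o.ToType) < κ) : #(⋃₀ D : Set o.ToType) < κ := by
  rw [Set.sUnion_eq_iUnion]
  rw [card_iUnion_lt_iff_forall_of_isRegular hreg hD]
  exact fun i => h i i.2

theorem union_mem_Pkl (hreg : κ.IsRegular) (hunc : ℵ₀ < κ) {s t : Set o.ToType}
    (hs : s ∈ Pkl κ o) (ht : t ∈ Pkl κ o) : s ∪ t ∈ Pkl κ o := by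
  have := Cardinal.mk_union_le s t
  exact lt_of_le_of_lt this (Cardinal.add_lt_of_lt hreg.aleph0_le hs ht)

/-- A finite subset of the union of a nonempty chain is contained in a member. -/
theorem chain_finset_subset {D : Set (Set o.ToType)} (hch : IsChain (· ⊆ ·) D)
    (hne : D.Nonempty) {e : Finset o.ToType} (he : (e : Set o.ToType) ⊆ ⋃₀ D) :
    ∃ d ∈ D, (e : Set o.ToType) ⊆ d := by
  have : Nonempty D := hne.to_subtype
  have hdir : Directed (· ⊆ ·) (fun d : D => (d : Set o.ToType)) := by
    intro a b
    rcases hch.directedOn a a.2 b b.2 with ⟨c, hc, h1, h2⟩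
    exact ⟨⟨c, hc⟩, h1, h2⟩
  rw [Set.sUnion_eq_iUnion] at he
  rcases hdir.exists_mem_subset_of_finset_subset_biUnion he with ⟨i, hi⟩
  exact ⟨i, i.2, hi⟩

/-- A monotone `ℕ`-indexed union of club members is a member. -/
theorem omega_chain_mem (hunc : ℵ₀ < κ) {C : Set (Set o.ToType)}
    (hC : ∀ D : Set (Set o.ToType),
      D ⊆ C → D.Nonempty → IsChain (· ⊆ ·) D → #D < κ → ⋃₀ D ∈ C)
    {u : ℕ → Set o.ToType} (hmono : Monotone u) (hu : ∀ n, u n ∈ C) :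
    (⋃ n, u n) ∈ C := by
  have h1 : (⋃ n, u n) = ⋃₀ (Set.range u) := by rw [Set.sUnion_range]
  rw [h1]
  apply hC
  · rintro _ ⟨n, rfl⟩; exact hu n
  · exact ⟨u 0, 0, rfl⟩
  · rintro _ ⟨m, rfl⟩ _ ⟨n, rfl⟩ _
    rcases le_total m n with h | h
    · exact Or.inl (hmono h)
    · exact Or.inr (hmono h)
  · have hc : (Set.range u).Countable := Set.countable_range u
    have := hc.to_subtype
    exact lt_of_le_of_lt Cardinal.mk_le_aleph0 hunc

/-- Chain-closure implies directed-closure for families of size `< κ`. -/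
theorem directed_sUnion_mem (hreg : κ.IsRegular) (hunc : ℵ₀ < κ) {C : Set (Set o.ToType)}
    (hC : ∀ D : Set (Set o.ToType),
      D ⊆ C → D.Nonempty → IsChain (· ⊆ ·) D → #D < κ → ⋃₀ D ∈ C) :
    ∀ D : Set (Set o.ToType), D ⊆ C → DirectedOn (· ⊆ ·) D → D.Nonempty → #D < κ →
      ⋃₀ D ∈ C := by
  suffices H : ∀ ρ : Cardinal.{u}, ∀ D : Set (Set o.ToType), D ⊆ C → DirectedOn (· ⊆ ·) D →
      D.Nonempty → #D < κ → #D ≤ ρ → ⋃₀ D ∈ C by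
    intro D h1 h2 h3 h4; exact H #D D h1 h2 h3 h4 le_rfl
  intro ρ
  induction ρ using WellFoundedLT.induction with
  | _ ρ IH =>
  intro D hDC hdir hne hκ hρ
  -- upper bound function inside `D`
  have hub : ∀ a : D, ∀ b : D, ∃ c : D, (a : Set o.ToType) ⊆ c ∧ (b : Set o.ToType) ⊆ c := by
    intro a b
    rcases hdir a a.2 b b.2 with ⟨c, hc, h1, h2⟩
    exact ⟨⟨c, hc⟩, h1, h2⟩
  classical
  let ub : D → D → D := fun a b => (hub a b).choose
  have hub1 : ∀ a b : D, (a : Set o.ToType) ⊆ ub a b := fun a b => (hub a b).choose_spec.1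
  have hub2 : ∀ a b : D, (b : Set o.ToType) ⊆ ub a b := fun a b => (hub a b).choose_spec.2
  by_cases hcnt : #D ≤ ℵ₀
  · -- countable (or finite) case : build an `ω`-chain
    have : Countable D := Cardinal.mk_le_aleph0_iff.1 hcnt
    have : Nonempty D := hne.to_subtype
    obtain ⟨φ, hφ⟩ := countable_iff_exists_surjective.1 ‹Countable D›
    let c : ℕ → D := fun n => Nat.rec (φ 0) (fun n cn => ub cn (φ (n + 1))) n
    have hceq : ∀ n, c (n + 1) = ub (c n) (φ (n + 1)) := fun n => rfl
    have hstep : ∀ n, (c n).1 ⊆ (c (n + 1)).1 := by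
      intro n
      rw [hceq n]
      exact hub1 _ _
    have hφc : ∀ n, (φ n).1 ⊆ (c n).1 := by
      intro n
      cases n with
      | zero => exact subset_rfl
      | succ n => exact hub2 _ _
    have hmono : Monotone fun n => (c n).1 := monotone_nat_of_le_succ hstep
    have hmem : (⋃ n, (c n).1) ∈ C :=
      omega_chain_mem hunc hC hmono fun n => hDC (c n).2
    have : (⋃ n, (c n).1) = ⋃₀ D := by
      apply Set.Subset.antisymm
      · exact Set.iUnion_subset fun n => Set.subset_sUnion_of_mem (c n).2
      · apply Set.sUnion_subset
        intro d hd
        obtain ⟨n, hn⟩ := hφ ⟨d, hd⟩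
        have hd2 : (φ n).1 = d := by rw [hn]
        rw [← hd2]
        exact (hφc n).trans (Set.subset_iUnion (fun n => (c n).1) n)
    rwa [this] at hmem
  · -- uncountable case
    push_neg at hcnt
    have hℵ : ℵ₀ < #D := hcnt
    have hρℵ : ℵ₀ < ρ := lt_of_lt_of_le hℵ hρ
    set I := (#D).ord.ToType with hI
    have hImk : #I = #D := by rw [hI, Cardinal.mk_toType, Cardinal.card_ord]
    obtain ⟨e⟩ : Nonempty (I ≃ D) := Cardinal.eq.1 (by rw [hImk])
    let T : I → ℕ → Set D := fun j n =>
      Nat.rec {d : D | e.symm d ≤ j} (fun _ Tn => Tn ∪ Set.image2 ub Tn Tn) n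
    have hT0 : ∀ j, T j 0 = {d : D | e.symm d ≤ j} := fun j => rfl
    have hTs : ∀ j n, T j (n + 1) = T j n ∪ Set.image2 ub (T j n) (T j n) := fun j n => rfl
    have hTmono : ∀ j, Monotone (T j) := by
      intro j
      apply monotone_nat_of_le_succ
      intro n
      rw [hTs]
      exact Set.subset_union_left
    have hTself : ∀ j : I, e j ∈ T j 0 := by
      intro j; rw [hT0]; simp
    -- cardinality bound
    have hcard : ∀ j : I, #(Set.Iic j) + ℵ₀ < #D := by
      intro j
      have h1 : #(Set.Iio j) < #D := by
        exact Cardinal.mk_Iio_ord_toType j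
      have h2 : #(Set.Iic j) < #D := by
        have : Set.Iic j = insert j (Set.Iio j) := by
          ext y; simp [le_iff_lt_or_eq, or_comm]
        rw [this]
        exact lt_of_le_of_lt Cardinal.mk_insert_le
          (Cardinal.add_lt_of_lt hℵ.le h1 (lt_trans Cardinal.one_lt_aleph0 hℵ))
      exact Cardinal.add_lt_of_lt hℵ.le h2 hℵ
    have hTcard : ∀ j n, #(↥(T j n)) ≤ #(Set.Iic j) + ℵ₀ := by
      intro j n
      set c0 := #(Set.Iic j) + ℵ₀ with hc0
      have hc0ℵ : ℵ₀ ≤ c0 := le_add_self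
      induction n with
      | zero =>
        rw [hT0]
        refine le_trans ?_ (self_le_add_right _ _)
        exact Cardinal.mk_le_of_injective (f := fun d : {d : D | e.symm d ≤ j} =>
          (⟨e.symm d.1, d.2⟩ : Set.Iic j)) (by
            intro a b hab
            simp only [Subtype.mk.injEq] at hab
            exact Subtype.ext (e.symm.injective (congrArg Subtype.val hab)))
      | succ n ih =>
        rw [hTs]
        refine le_trans (Cardinal.mk_union_le _ _) ?_
        refine le_trans (add_le_add ih (le_trans Cardinal.mk_image2_le
          (mul_le_mul' ih ih))) ?_
        rw [Cardinal.mul_eq_self hc0ℵ, Cardinal.add_eq_self hc0ℵ]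
    -- the directed subfamilies
    let S : I → Set D := fun j => ⋃ n, T j n
    let Dj : I → Set (Set o.ToType) := fun j => Subtype.val '' S j
    have hSD : ∀ j, Dj j ⊆ D := by
      rintro j _ ⟨d, _, rfl⟩; exact d.2
    have hScard : ∀ j, #(S j) < #D := by
      intro j
      have : #(S j) ≤ ℵ₀ * (#(Set.Iic j) + ℵ₀) := by
        have h1 : S j = ⋃ n : ULift.{u} ℕ, T j n.down := by
          apply Set.Subset.antisymm
          · exact Set.iUnion_subset fun n => Set.subset_iUnion (fun m : ULift.{u} ℕ => T j m.down) ⟨n⟩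
          · exact Set.iUnion_subset fun n => Set.subset_iUnion (fun m => T j m) n.down
        rw [h1]
        refine le_trans (Cardinal.mk_iUnion_le _) ?_
        refine mul_le_mul' (by simp) ?_
        exact ciSup_le' fun n => hTcard j n.down
      refine lt_of_le_of_lt this ?_
      rw [Cardinal.mul_eq_max le_rfl le_add_self]
      exact max_lt hℵ (hcard j)
    have hDjcard : ∀ j, #(Dj j) < #D := fun j =>
      lt_of_le_of_lt Cardinal.mk_image_le (hScard j)
    have hSdir : ∀ j, DirectedOn (· ⊆ ·) (Dj j) := by
      rintro j _ ⟨a, ha, rfl⟩ _ ⟨b, hb, rfl⟩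
      obtain ⟨m, hm⟩ := Set.mem_iUnion.1 ha
      obtain ⟨n, hn⟩ := Set.mem_iUnion.1 hb
      have ham : a ∈ T j (max m n) := hTmono j (le_max_left m n) hm
      have hbn : b ∈ T j (max m n) := hTmono j (le_max_right m n) hn
      have : ub a b ∈ T j (max m n + 1) := by
        rw [hTs]
        exact Or.inr (Set.mem_image2_of_mem ham hbn)
      exact ⟨ub a b, ⟨ub a b, Set.mem_iUnion.2 ⟨max m n + 1, this⟩, rfl⟩, hub1 a b, hub2 a b⟩
    have hSne : ∀ j, (Dj j).Nonempty :=
      fun j => ⟨e j, e j, Set.mem_iUnion.2 ⟨0, hTself j⟩, rfl⟩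
    have hUmem : ∀ j, ⋃₀ Dj j ∈ C := by
      intro j
      refine IH #(Dj j) (lt_of_lt_of_le (hDjcard j) hρ) (Dj j)
        (fun d hd => hDC (hSD j hd)) (hSdir j) (hSne j)
        (lt_trans (hDjcard j) hκ) le_rfl
    -- the chain of partial unions
    let U : I → Set o.ToType := fun j => ⋃₀ Dj j
    have hUmono : ∀ j j' : I, j ≤ j' → U j ⊆ U j' := by
      intro j j' hjj
      apply Set.sUnion_subset_sUnion
      apply Set.image_mono
      apply Set.iUnion_subset
      intro n
      refine le_trans ?_ (Set.subset_iUnion (T j') n)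
      -- T j n ⊆ T j' n
      induction n with
      | zero =>
        rw [hT0, hT0]
        exact fun d hd => le_trans hd hjj
      | succ n ih =>
        rw [hTs, hTs]
        exact Set.union_subset_union ih (Set.image2_subset ih ih)
    have hIne : Nonempty I := by
      rw [← Cardinal.mk_ne_zero_iff, hImk]
      exact ne_of_gt (lt_trans Cardinal.aleph0_pos hℵ)
    have hchain : IsChain (· ⊆ ·) (Set.range U) := by
      rintro _ ⟨j, rfl⟩ _ ⟨j', rfl⟩ _
      rcases le_total j j' with h | h
      · exact Or.inl (hUmono _ _ h)
      · exact Or.inr (hUmono _ _ h)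
    have hmem : ⋃₀ Set.range U ∈ C := by
      apply hC
      · rintro _ ⟨j, rfl⟩; exact hUmem j
      · obtain ⟨j⟩ := hIne; exact ⟨U j, j, rfl⟩
      · exact hchain
      · refine lt_of_le_of_lt Cardinal.mk_range_le ?_
        rw [hImk]; exact hκ
    have : ⋃₀ Set.range U = ⋃₀ D := by
      apply Set.Subset.antisymm
      · apply Set.sUnion_subset
        rintro _ ⟨j, rfl⟩
        exact Set.sUnion_subset fun d hd => Set.subset_sUnion_of_mem (hSD j hd)
      · apply Set.sUnion_subset
        intro d hd
        refine Set.Subset.trans ?_ (Set.subset_sUnion_of_mem ⟨e.symm ⟨d, hd⟩, rfl⟩)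
        refine Set.subset_sUnion_of_mem ?_
        exact ⟨⟨d, hd⟩, Set.mem_iUnion.2 ⟨0, by simp only [hT0, Set.mem_setOf_eq]; exact le_rfl⟩, rfl⟩
    rwa [this] at hmem

/-- The collection of finite subsets of a `< κ` sized set is `< κ` sized. -/
theorem mk_finset_subset_lt (hunc : ℵ₀ < κ) {v : Set o.ToType} (hv : #v < κ) :
    #{e : Finset o.ToType | (e : Set o.ToType) ⊆ v} < κ := by
  classical
  have hinj : Function.Injective (fun p : {e : Finset o.ToType // (e : Set o.ToType) ⊆ v} =>
      p.1.attach.map ⟨fun x => (⟨x.1, p.2 x.2⟩ : v), fun a b hab => by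
        cases a; cases b; simpa using congrArg Subtype.val hab⟩) := by
    intro p q hpq
    simp only at hpq
    apply Subtype.ext
    ext x
    constructor
    · intro hx
      have hmem : (⟨x, p.2 hx⟩ : v) ∈ p.1.attach.map
          ⟨fun y => (⟨y.1, p.2 y.2⟩ : v), fun a b hab => by
            cases a; cases b; simpa using congrArg Subtype.val hab⟩ :=
        Finset.mem_map.2 ⟨⟨x, hx⟩, Finset.mem_attach _ _, rfl⟩
      rw [hpq] at hmem
      obtain ⟨a, _, ha⟩ := Finset.mem_map.1 hmem
      have : a.1 = x := congrArg Subtype.val ha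
      rw [← this]; exact a.2
    · intro hx
      have hmem : (⟨x, q.2 hx⟩ : v) ∈ q.1.attach.map
          ⟨fun y => (⟨y.1, q.2 y.2⟩ : v), fun a b hab => by
            cases a; cases b; simpa using congrArg Subtype.val hab⟩ :=
        Finset.mem_map.2 ⟨⟨x, hx⟩, Finset.mem_attach _ _, rfl⟩
      rw [← hpq] at hmem
      obtain ⟨a, _, ha⟩ := Finset.mem_map.1 hmem
      have : a.1 = x := congrArg Subtype.val ha
      rw [← this]; exact a.2
  have h1 : #{e : Finset o.ToType | (e : Set o.ToType) ⊆ v} ≤ #(Finset v) :=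
    Cardinal.mk_le_of_injective hinj
  refine lt_of_le_of_lt h1 ?_
  rcases finite_or_infinite v with hf | hinf
  · have : Countable (Finset v) := inferInstance
    exact lt_of_le_of_lt Cardinal.mk_le_aleph0 hunc
  · rw [Cardinal.mk_finset_of_infinite]
    exact hv

/-- Intersection of two clubs is a club. -/
theorem club_inter (hreg : κ.IsRegular) (hunc : ℵ₀ < κ) {C₁ C₂ : Set (Set o.ToType)}
    (h1 : IsClubK κ o C₁) (h2 : IsClubK κ o C₂) : IsClubK κ o (C₁ ∩ C₂) := by
  classical
  refine ⟨fun t ht => h1.1 ht.1, ?_, ?_⟩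
  · intro D hD hne hch hcd
    exact ⟨h1.2.1 D (fun d hd => (hD hd).1) hne hch hcd,
      h2.2.1 D (fun d hd => (hD hd).2) hne hch hcd⟩
  · intro s hs
    have ch1 : ∀ t : {t : Set o.ToType // t ∈ Pkl κ o},
        ∃ a : Set o.ToType, a ∈ C₁ ∧ t.1 ⊆ a := fun t => by
      obtain ⟨a, ha, hta⟩ := h1.2.2 t.1 t.2
      exact ⟨a, ha, hta⟩
    have ch2 : ∀ t : {t : Set o.ToType // t ∈ Pkl κ o},
        ∃ a : Set o.ToType, a ∈ C₂ ∧ t.1 ⊆ a := fun t => by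
      obtain ⟨a, ha, hta⟩ := h2.2.2 t.1 t.2
      exact ⟨a, ha, hta⟩
    let c1 : {t : Set o.ToType // t ∈ Pkl κ o} → {t : Set o.ToType // t ∈ Pkl κ o} :=
      fun t => ⟨(ch1 t).choose, h1.1 (ch1 t).choose_spec.1⟩
    let c2 : {t : Set o.ToType // t ∈ Pkl κ o} → {t : Set o.ToType // t ∈ Pkl κ o} :=
      fun t => ⟨(ch2 t).choose, h2.1 (ch2 t).choose_spec.1⟩
    have hc1C : ∀ t, (c1 t).1 ∈ C₁ := fun t => (ch1 t).choose_spec.1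
    have hc2C : ∀ t, (c2 t).1 ∈ C₂ := fun t => (ch2 t).choose_spec.1
    have hc1s : ∀ t, t.1 ⊆ (c1 t).1 := fun t => (ch1 t).choose_spec.2
    have hc2s : ∀ t, t.1 ⊆ (c2 t).1 := fun t => (ch2 t).choose_spec.2
    let b : ℕ → {t : Set o.ToType // t ∈ Pkl κ o} :=
      fun n => Nat.rec ⟨s, hs⟩ (fun _ t => c2 (c1 t)) n
    have hbeq : ∀ n, b (n + 1) = c2 (c1 (b n)) := fun n => rfl
    let A : ℕ → Set o.ToType := fun n => (c1 (b n)).1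
    have hA1 : ∀ n, (b n).1 ⊆ A n := fun n => hc1s (b n)
    have hA2 : ∀ n, A n ⊆ (b (n + 1)).1 := by
      intro n; rw [hbeq n]; exact hc2s (c1 (b n))
    have hAC : ∀ n, A n ∈ C₁ := fun n => hc1C (b n)
    have hBC : ∀ n, (b (n + 1)).1 ∈ C₂ := by
      intro n; rw [hbeq n]; exact hc2C (c1 (b n))
    have hAmono : Monotone A := monotone_nat_of_le_succ fun n =>
      (hA2 n).trans (hA1 (n + 1))
    have hBmono : Monotone fun n => (b (n + 1)).1 := monotone_nat_of_le_succ fun n =>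
      (hA1 (n + 1)).trans (hA2 (n + 1))
    have hU1 : (⋃ n, A n) ∈ C₁ := omega_chain_mem hunc h1.2.1 hAmono hAC
    have hU2 : (⋃ n, (b (n + 1)).1) ∈ C₂ := omega_chain_mem hunc h2.2.1 hBmono hBC
    have hUeq : (⋃ n, A n) = ⋃ n, (b (n + 1)).1 := by
      apply Set.Subset.antisymm
      · exact Set.iUnion_subset fun n =>
          (hA2 n).trans (Set.subset_iUnion (fun n => (b (n + 1)).1) n)
      · exact Set.iUnion_subset fun n =>
          (hA1 (n + 1)).trans (Set.subset_iUnion A (n + 1))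
    refine ⟨⋃ n, A n, ⟨hU1, by rw [hUeq]; exact hU2⟩, ?_⟩
    exact (hA1 0).trans (Set.subset_iUnion A 0)

/-- Principal clubs. -/
theorem club_principal (hreg : κ.IsRegular) (hunc : ℵ₀ < κ) {s₀ : Set o.ToType}
    (hs₀ : s₀ ∈ Pkl κ o) : IsClubK κ o {t | t ∈ Pkl κ o ∧ s₀ ⊆ t} := by
  refine ⟨fun t ht => ht.1, ?_, ?_⟩
  · intro D hD hne hch hcd
    obtain ⟨d, hd⟩ := hne
    refine ⟨small_sUnion hreg hcd fun d hd => (hD hd).1, ?_⟩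
    exact ((hD hd).2).trans (Set.subset_sUnion_of_mem hd)
  · intro s hs
    exact ⟨s ∪ s₀, ⟨union_mem_Pkl hreg hunc hs hs₀, Set.subset_union_right⟩,
      Set.subset_union_left⟩

/-- The closure-point club of a function on finite sets. -/
def CgSet (κ : Cardinal.{u}) (o : Ordinal.{u}) (g : Finset o.ToType → Set o.ToType) :
    Set (Set o.ToType) :=
  {s | s ∈ Pkl κ o ∧ ∀ e : Finset o.ToType, (e : Set o.ToType) ⊆ s → g e ⊆ s}

theorem CgSet_club (hreg : κ.IsRegular) (hunc : ℵ₀ < κ)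
    (g : Finset o.ToType → Set o.ToType) (hg : ∀ e, #(g e) < κ) :
    IsClubK κ o (CgSet κ o g) := by
  classical
  refine ⟨fun t ht => ht.1, ?_, ?_⟩
  · intro D hD hne hch hcd
    refine ⟨small_sUnion hreg hcd fun d hd => (hD hd).1, ?_⟩
    intro e he
    obtain ⟨d, hd, hed⟩ := chain_finset_subset hch hne he
    exact ((hD hd).2 e hed).trans (Set.subset_sUnion_of_mem hd)
  · intro s hs
    let u : ℕ → Set o.ToType := fun n =>
      Nat.rec s (fun _ un => un ∪ ⋃ e ∈ {e : Finset o.ToType | (e : Set o.ToType) ⊆ un}, g e) n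
    have hueq : ∀ n, u (n + 1) =
        u n ∪ ⋃ e ∈ {e : Finset o.ToType | (e : Set o.ToType) ⊆ u n}, g e := fun n => rfl
    have humono : Monotone u := monotone_nat_of_le_succ fun n => by
      rw [hueq n]; exact Set.subset_union_left
    have hucard : ∀ n, #(↥(u n)) < κ := by
      intro n
      induction n with
      | zero => exact hs
      | succ n ih =>
        rw [hueq n]
        refine lt_of_le_of_lt (Cardinal.mk_union_le _ _)
          (Cardinal.add_lt_of_lt hreg.aleph0_le ih ?_)
        refine lt_of_le_of_lt (Cardinal.mk_biUnion_le _ _) ?_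
        refine Cardinal.mul_lt_of_lt hreg.aleph0_le (mk_finset_subset_lt hunc ih) ?_
        refine Cardinal.iSup_lt_of_isRegular hreg (mk_finset_subset_lt hunc ih) ?_
        exact fun e => hg e
    have hfin : ∀ (e : Finset o.ToType), (e : Set o.ToType) ⊆ (⋃ n, u n) →
        ∃ n, (e : Set o.ToType) ⊆ u n := by
      intro e he
      exact (humono.directed_le).exists_mem_subset_of_finset_subset_biUnion he
    refine ⟨⋃ n, u n, ⟨?_, ?_⟩, ?_⟩
    · -- cardinality
      have : (⋃ n, u n) = ⋃₀ Set.range u := by rw [Set.sUnion_range]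
      rw [this]
      apply small_sUnion hreg
      · have hc : (Set.range u).Countable := Set.countable_range u
        have := hc.to_subtype
        exact lt_of_le_of_lt Cardinal.mk_le_aleph0 hunc
      · rintro _ ⟨n, rfl⟩; exact hucard n
    · intro e he
      obtain ⟨n, hn⟩ := hfin e he
      refine Set.Subset.trans ?_ (Set.subset_iUnion u (n + 1))
      rw [hueq n]
      exact Set.subset_union_of_subset_right
        (Set.subset_biUnion_of_mem (u := fun e => g e) hn) _
    · exact Set.subset_iUnion u 0

/-- Every club contains a closure-point club. -/
theorem exists_Cg_subset (hreg : κ.IsRegular) (hunc : ℵ₀ < κ) {C : Set (Set o.ToType)}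
    (hclub : IsClubK κ o C) :
    ∃ g : Finset o.ToType → Set o.ToType, (∀ e, #(g e) < κ) ∧ CgSet κ o g ⊆ C := by
  classical
  have hstep : ∀ (e : Finset o.ToType)
      (r : ∀ e' : Finset o.ToType, e' ⊂ e → {t : Set o.ToType // t ∈ C}),
      ∃ t, t ∈ C ∧
        ((e : Set o.ToType) ∪ ⋃ e' ∈ {e' : Finset o.ToType | e' ⊂ e},
          (if h : e' ⊂ e then (r e' h).1 else ∅)) ⊆ t := by
    intro e r
    apply hclub.2.2
    have h1 : #(↥(e : Set o.ToType)) < κ := lt_trans (e.finite_toSet.lt_aleph0) hunc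
    have hfin : ({e' : Finset o.ToType | e' ⊂ e}).Finite := by
      refine Set.Finite.subset e.powerset.finite_toSet ?_
      intro e' he'
      simp only [Finset.coe_powerset, Set.mem_preimage, Set.mem_powerset_iff,
        Finset.coe_subset, Finset.mem_coe, Finset.mem_powerset]
      exact he'.subset
    have hcnt : #(↥{e' : Finset o.ToType | e' ⊂ e}) < κ := by
      have := hfin.to_subtype
      exact lt_of_le_of_lt Cardinal.mk_le_aleph0 hunc
    have h2 : #(↥(⋃ e' ∈ {e' : Finset o.ToType | e' ⊂ e},
        (if h : e' ⊂ e then (r e' h).1 else ∅))) < κ := by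
      refine lt_of_le_of_lt (Cardinal.mk_biUnion_le _ _) ?_
      refine Cardinal.mul_lt_of_lt hreg.aleph0_le hcnt ?_
      refine Cardinal.iSup_lt_of_isRegular hreg hcnt ?_
      intro e'
      have he' : (e'.1 : Finset o.ToType) ⊂ e := e'.2
      rw [dif_pos he']
      exact hclub.1 (r e'.1 he').2
    exact lt_of_le_of_lt (Cardinal.mk_union_le _ _)
      (Cardinal.add_lt_of_lt hreg.aleph0_le h1 h2)
  let g0 : Finset o.ToType → {t : Set o.ToType // t ∈ C} :=
    fun e => (Finset.isWellFounded_ssubset.wf).fix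
      (C := fun _ => {t : Set o.ToType // t ∈ C})
      (fun e r => ⟨(hstep e r).choose, (hstep e r).choose_spec.1⟩) e
  have hg0eq : ∀ e, g0 e = ⟨(hstep e fun e' _ => g0 e').choose,
      (hstep e fun e' _ => g0 e').choose_spec.1⟩ := by
    intro e
    exact (Finset.isWellFounded_ssubset.wf).fix_eq _ e
  let g : Finset o.ToType → Set o.ToType := fun e => (g0 e).1
  have hgC : ∀ e, g e ∈ C := fun e => (g0 e).2
  have hgbase : ∀ e : Finset o.ToType, ((e : Set o.ToType) ∪
      ⋃ e' ∈ {e' : Finset o.ToType | e' ⊂ e},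
        (if h : e' ⊂ e then g e' else ∅)) ⊆ g e := by
    intro e
    have hch := (hstep e fun e' _ => g0 e').choose_spec.2
    have heq : g e = (hstep e fun e' _ => g0 e').choose := congrArg Subtype.val (hg0eq e)
    rw [heq]
    exact hch
  have hge : ∀ e : Finset o.ToType, (e : Set o.ToType) ⊆ g e := fun e =>
    (Set.subset_union_left).trans (hgbase e)
  have hgmono : ∀ e e' : Finset o.ToType, e ⊆ e' → g e ⊆ g e' := by
    intro e e' hee
    rcases lt_or_eq_of_le (Finset.le_iff_subset.2 hee) with h | h
    · refine Set.Subset.trans ?_ (hgbase e')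
      refine Set.subset_union_of_subset_right ?_ _
      have h' : e ⊂ e' := h
      refine Set.Subset.trans ?_
        (Set.subset_biUnion_of_mem (u := fun e'' => if _ : e'' ⊂ e' then g e'' else ∅) h')
      simp only [dif_pos h']
      exact subset_rfl
    · rw [h]
  refine ⟨g, fun e => hclub.1 (hgC e), ?_⟩
  intro s hsC
  obtain ⟨hsP, hscl⟩ := hsC
  let D : Set (Set o.ToType) := g '' {e : Finset o.ToType | (e : Set o.ToType) ⊆ s}
  have hDC : D ⊆ C := by rintro _ ⟨e, _, rfl⟩; exact hgC e
  have hDne : D.Nonempty := ⟨g ∅, ∅, by simp, rfl⟩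
  have hDdir : DirectedOn (· ⊆ ·) D := by
    rintro _ ⟨e₁, he₁, rfl⟩ _ ⟨e₂, he₂, rfl⟩
    refine ⟨g (e₁ ∪ e₂), ⟨e₁ ∪ e₂, ?_, rfl⟩, hgmono _ _ Finset.subset_union_left,
      hgmono _ _ Finset.subset_union_right⟩
    rw [Set.mem_setOf_eq, Finset.coe_union]
    exact Set.union_subset he₁ he₂
  have hDcard : #(↥D) < κ := lt_of_le_of_lt Cardinal.mk_image_le (mk_finset_subset_lt hunc hsP)
  have hDU : ⋃₀ D = s := by
    apply Set.Subset.antisymm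
    · apply Set.sUnion_subset
      rintro _ ⟨e, he, rfl⟩
      exact hscl e he
    · intro x hx
      refine Set.mem_sUnion.2 ⟨g {x}, ⟨{x}, by simpa using hx, rfl⟩, ?_⟩
      exact hge {x} (by simp)
  have := directed_sUnion_mem hreg hunc hclub.2.1 D hDC hDdir hDne hDcard
  rwa [hDU] at this

/-- `P_κ(λ)` has at least `λ^{<κ}` elements. -/
theorem mk_Pkl_ge {κ lam : Cardinal.{u}} (hreg : κ.IsRegular) (hunc : ℵ₀ < κ)
    (hkl : κ ≤ lam) : lam ^< κ ≤ #(Pkl κ lam.ord) := by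
  classical
  have hα : #(lam.ord.ToType) = lam := by rw [Cardinal.mk_toType, Cardinal.card_ord]
  have hlam : ℵ₀ ≤ lam := le_trans hunc.le hkl
  rw [Cardinal.powerlt_le]
  intro c hc
  rcases eq_or_ne c 0 with rfl | hc0
  · rw [Cardinal.power_zero, Cardinal.one_le_iff_ne_zero, Cardinal.mk_ne_zero_iff]
    refine ⟨⟨∅, ?_⟩⟩
    show #(↥(∅ : Set lam.ord.ToType)) < κ
    simpa using lt_trans Cardinal.aleph0_pos hunc
  · have hce : #(c.out) = c := Cardinal.mk_out c
    have hprod : #(c.out × lam.ord.ToType) = lam := by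
      rw [Cardinal.mk_prod, Cardinal.lift_id, Cardinal.lift_id, hce, hα]
      exact Cardinal.mul_eq_right hlam (le_trans hc.le hkl) hc0
    obtain ⟨E⟩ : Nonempty (c.out × lam.ord.ToType ≃ lam.ord.ToType) :=
      Cardinal.eq.1 (by rw [hprod, hα])
    have hmem : ∀ f : c.out → lam.ord.ToType,
        Set.range (fun i => E (i, f i)) ∈ Pkl κ lam.ord := by
      intro f
      have h1 : #(Set.range fun i => E (i, f i)) ≤ c :=
        le_of_le_of_eq Cardinal.mk_range_le hce
      exact lt_of_le_of_lt h1 hc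
    have hinj : Function.Injective (fun f : c.out → lam.ord.ToType =>
        (⟨Set.range fun i => E (i, f i), hmem f⟩ : ↥(Pkl κ lam.ord))) := by
      intro f f' hff
      funext i
      have h1 : E (i, f i) ∈ Set.range fun j => E (j, f' j) := by
        have h2 := congrArg Subtype.val hff
        simp only at h2
        rw [← h2]
        exact ⟨i, rfl⟩
      obtain ⟨j, hj⟩ := h1
      have h3 : (j, f' j) = (i, f i) := E.injective hj
      have h4 : j = i := (Prod.ext_iff.1 h3).1
      have h5 : f' j = f i := (Prod.ext_iff.1 h3).2
      subst h4
      exact h5.symm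
    calc lam ^ c = #(c.out → lam.ord.ToType) := by rw [← Cardinal.power_def, hα, hce]
      _ ≤ #(Pkl κ lam.ord) := Cardinal.mk_le_of_injective hinj

/-- Every stationary subset of `P_κ(λ)` has at least `λ^{<κ}` elements. -/
theorem stat_card {κ lam : Cardinal.{u}} (hreg : κ.IsRegular) (hunc : ℵ₀ < κ)
    (hkl : κ ≤ lam) (h1 : (2 : Cardinal) ^< κ < lam ^< κ)
    {Y : Set (Set lam.ord.ToType)} (hYP : Y ⊆ Pkl κ lam.ord)
    (hY : IsStatK κ lam.ord Y) : lam ^< κ ≤ #Y := by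
  classical
  by_contra hlt
  push_neg at hlt
  have hcof : ∀ s ∈ Pkl κ lam.ord, ∃ t ∈ Y, s ⊆ t := by
    intro s hs
    obtain ⟨t, htY, ht⟩ := hY _ (club_principal hreg hunc hs)
    exact ⟨t, htY, ht.2⟩
  have hcover : (Pkl κ lam.ord) ⊆ ⋃ t ∈ Y, {s : Set lam.ord.ToType | s ⊆ t} := by
    intro s hs
    obtain ⟨t, htY, hst⟩ := hcof s hs
    exact Set.mem_biUnion htY hst
  have hν : lam ^< κ ≤ #(↥(⋃ t ∈ Y, {s : Set lam.ord.ToType | s ⊆ t})) :=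
    le_trans (mk_Pkl_ge hreg hunc hkl) (Cardinal.mk_le_mk_of_subset hcover)
  have hbound : #(↥(⋃ t ∈ Y, {s : Set lam.ord.ToType | s ⊆ t})) ≤ #Y * ((2 : Cardinal) ^< κ) := by
    refine le_trans (Cardinal.mk_biUnion_le _ _) ?_
    refine mul_le_mul' le_rfl ?_
    refine ciSup_le' ?_
    intro t
    have h2 : #{s : Set lam.ord.ToType | s ⊆ t.1} = 2 ^ #(↥t.1) := by
      rw [show {s : Set lam.ord.ToType | s ⊆ t.1} = 𝒫 t.1 from rfl, Cardinal.mk_powerset]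
    rw [h2]
    exact Cardinal.le_powerlt 2 (hYP t.2)
  have hνℵ : ℵ₀ ≤ lam ^< κ := by
    refine le_trans (le_trans hunc.le hkl) ?_
    have := Cardinal.le_powerlt lam (lt_trans Cardinal.one_lt_aleph0 hunc)
    rwa [Cardinal.power_one] at this
  have hfin : #Y * ((2 : Cardinal) ^< κ) < lam ^< κ :=
    Cardinal.mul_lt_of_lt hνℵ hlt h1
  exact absurd (le_trans hν hbound) (not_le.2 hfin)

/-- Bernstein-style injective choice: if each set in a `≤ c`-indexed family has
cardinality `≥ c`, one can pick distinct representatives. -/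
theorem exists_injective_choice {β ι : Type u} (c : Cardinal.{u})
    (hι : #ι ≤ c) (S : ι → Set β) (hS : ∀ i, c ≤ #(S i)) :
    ∃ x : ι → β, Function.Injective x ∧ ∀ i, x i ∈ S i := by
  classical
  obtain ⟨φ⟩ : Nonempty (ι ↪ c.ord.ToType) := by
    rw [← Cardinal.le_def, Cardinal.mk_toType, Cardinal.card_ord]
    exact hι
  set r : ι → ι → Prop := fun i j => φ i < φ j with hr
  have hwf : WellFounded r := InvImage.wf φ wellFounded_lt
  have key : ∀ (i : ι) (rec : ∀ j, r j i → β),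
      (S i \ Set.range (fun j : {j // r j i} => rec j.1 j.2)).Nonempty := by
    intro i rec
    rw [Set.nonempty_iff_ne_empty]
    intro hemp
    have hsub : S i ⊆ Set.range (fun j : {j // r j i} => rec j.1 j.2) := by
      intro y hy
      by_contra hy2
      have : y ∈ S i \ Set.range (fun j : {j // r j i} => rec j.1 j.2) := ⟨hy, hy2⟩
      rw [hemp] at this
      exact this
    have h1 : c ≤ #(Set.range fun j : {j // r j i} => rec j.1 j.2) :=
      le_trans (hS i) (Cardinal.mk_le_mk_of_subset hsub)
    have h2 : #(Set.range fun j : {j // r j i} => rec j.1 j.2) ≤ #{j // r j i} :=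
      Cardinal.mk_range_le
    have h3 : #{j // r j i} ≤ #(Set.Iio (φ i)) := by
      refine Cardinal.mk_le_of_injective (f := fun j : {j // r j i} =>
        (⟨φ j.1, j.2⟩ : Set.Iio (φ i))) ?_
      intro a b hab
      exact Subtype.ext (φ.injective (congrArg Subtype.val hab))
    have h4 : #(Set.Iio (φ i)) < c := Cardinal.mk_Iio_ord_toType (φ i)
    exact absurd (le_trans h1 (le_trans h2 h3)) (not_le.2 h4)
  let x : ι → β := fun i => hwf.fix (C := fun _ => β) (fun i rec => (key i rec).some) i
  have hxeq : ∀ i, x i = (key i (fun j _ => x j)).some := fun i => hwf.fix_eq _ i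
  have hxmem : ∀ i, x i ∈ S i ∧ x i ∉ Set.range (fun j : {j // r j i} => x j.1) := by
    intro i
    have h5 := (key i (fun j _ => x j)).some_mem
    rw [← hxeq i] at h5
    exact ⟨h5.1, h5.2⟩
  refine ⟨x, ?_, fun i => (hxmem i).1⟩
  intro i j hij
  by_contra hne
  have hφne : φ i ≠ φ j := fun h => hne (φ.injective h)
  rcases lt_or_gt_of_ne hφne with h | h
  · exact (hxmem j).2 ⟨⟨i, h⟩, hij⟩
  · exact (hxmem i).2 ⟨⟨j, h⟩, hij.symm⟩

end Stmt3Aux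

open Stmt3Aux in
/-- Let `κ` be regular uncountable and `λ ≥ κ` with `2^{<κ} < λ^{<κ} = 2^λ`.
Then every stationary subset of `P_κ(λ)` can be partitioned into `2^λ` (that is,
`λ^{<κ}`) pairwise disjoint stationary sets. -/
theorem stmt3 (κ lam : Cardinal) (hreg : κ.IsRegular) (hunc : ℵ₀ < κ)
    (hkl : κ ≤ lam) (h1 : (2 : Cardinal) ^< κ < lam ^< κ) (h2 : lam ^< κ = 2 ^ lam)
    (X : Set (Set lam.ord.ToType)) (hX : X ⊆ Pkl κ lam.ord)
    (hstat : IsStatK κ lam.ord X) :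
    ∃ P : Set (Set (Set lam.ord.ToType)), #P = 2 ^ lam ∧
      (∀ Y ∈ P, IsStatK κ lam.ord Y) ∧ P.PairwiseDisjoint id ∧ ⋃₀ P = X := by
  classical
  have hα : #(lam.ord.ToType) = lam := by rw [Cardinal.mk_toType, Cardinal.card_ord]
  have hlam : ℵ₀ ≤ lam := le_trans hunc.le hkl
  have hinf : Infinite lam.ord.ToType := Cardinal.infinite_iff.2 (by rw [hα]; exact hlam)
  set ν : Cardinal := 2 ^ lam with hνdef
  have hνℵ : ℵ₀ ≤ ν := le_trans hlam (le_of_lt (Cardinal.cantor lam))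
  let Sub := {t : Set lam.ord.ToType // t ∈ Pkl κ lam.ord}
  let G := Finset lam.ord.ToType → Sub
  let ι := Set lam.ord.ToType × G
  have hG : #G ≤ ν := by
    have h3 : #G = #Sub ^ #(Finset lam.ord.ToType) :=
      (Cardinal.power_def Sub (Finset lam.ord.ToType)).symm
    rw [h3, Cardinal.mk_finset_of_infinite]
    have h4 : #Sub ≤ ν := by
      refine le_trans (Cardinal.mk_subtype_le _) ?_
      rw [Cardinal.mk_set, hα]
    calc #Sub ^ #(lam.ord.ToType) ≤ ν ^ #(lam.ord.ToType) :=
          Cardinal.power_le_power_right h4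
      _ = (2 ^ lam) ^ lam := by rw [hα]
      _ = 2 ^ (lam * lam) := (Cardinal.power_mul).symm
      _ = ν := by rw [Cardinal.mul_eq_self hlam]
  have hι : #ι ≤ ν := by
    have hp : #ι = #(Set lam.ord.ToType) * #G := by
      rw [Cardinal.mk_prod, Cardinal.lift_id, Cardinal.lift_id]
    have hset : #(Set lam.ord.ToType) = ν := by rw [Cardinal.mk_set, hα]
    rw [hp, hset]
    calc ν * #G ≤ ν * ν := mul_le_mul' le_rfl hG
      _ = ν := Cardinal.mul_eq_self hνℵ
  let Sf : ι → Set (Set lam.ord.ToType) := fun p =>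
    X ∩ CgSet κ lam.ord (fun e => (p.2 e).1)
  have hSstat : ∀ p : ι, IsStatK κ lam.ord (Sf p) := by
    intro p C hC
    have hcg : IsClubK κ lam.ord (CgSet κ lam.ord (fun e => (p.2 e).1)) :=
      CgSet_club hreg hunc _ (fun e => (p.2 e).2)
    have hint := hstat _ (club_inter hreg hunc hcg hC)
    rwa [← Set.inter_assoc] at hint
  have hScard : ∀ p : ι, ν ≤ #(Sf p) := by
    intro p
    have hsc := stat_card hreg hunc hkl h1 (fun t ht => hX ht.1) (hSstat p)
    exact le_trans (le_of_eq h2.symm) hsc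
  obtain ⟨x, hxinj, hxmem⟩ := exists_injective_choice ν hι Sf hScard
  let Q : Set lam.ord.ToType → Set (Set lam.ord.ToType) := fun A => x '' {p : ι | p.1 = A}
  let Q' : Set lam.ord.ToType → Set (Set lam.ord.ToType) := fun A =>
    if A = ∅ then Q A ∪ (X \ Set.range x) else Q A
  have hQ'def : ∀ A, Q' A = if A = ∅ then Q A ∪ (X \ Set.range x) else Q A := fun A => rfl
  have hQQ' : ∀ A, Q A ⊆ Q' A := by
    intro A
    rw [hQ'def A]
    by_cases hA : A = ∅
    · rw [if_pos hA]; exact Set.subset_union_left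
    · rw [if_neg hA]
  have hQX : ∀ A, Q A ⊆ X := by
    rintro A _ ⟨p, _, rfl⟩
    exact (hxmem p).1
  have hQ'X : ∀ A, Q' A ⊆ X := by
    intro A
    rw [hQ'def A]
    by_cases hA : A = ∅
    · rw [if_pos hA]; exact Set.union_subset (hQX A) Set.diff_subset
    · rw [if_neg hA]; exact hQX A
  have hQ'stat : ∀ A, IsStatK κ lam.ord (Q' A) := by
    intro A C hC
    obtain ⟨g, hgs, hgsub⟩ := exists_Cg_subset hreg hunc hC
    let gp : G := fun e => ⟨g e, hgs e⟩
    have hxp := hxmem (A, gp)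
    exact ⟨x (A, gp), hQQ' A ⟨(A, gp), rfl, rfl⟩, hgsub hxp.2⟩
  have hQ'ne : ∀ A, (Q' A).Nonempty := by
    intro A
    have hemp : (∅ : Set lam.ord.ToType) ∈ Pkl κ lam.ord := by
      show #(↥(∅ : Set lam.ord.ToType)) < κ
      simpa using lt_trans Cardinal.aleph0_pos hunc
    obtain ⟨t, ht⟩ := hQ'stat A _ (club_principal hreg hunc hemp)
    exact ⟨t, ht.1⟩
  have hcase : ∀ {A' t}, t ∈ Q' A' → t ∈ Q A' ∨ (A' = ∅ ∧ t ∉ Set.range x) := by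
    intro A' t ht
    rw [hQ'def A'] at ht
    by_cases hA : A' = ∅
    · rw [if_pos hA] at ht
      rcases ht with h | h
      · exact Or.inl h
      · exact Or.inr ⟨hA, h.2⟩
    · rw [if_neg hA] at ht
      exact Or.inl ht
  have hQ'disj : ∀ A B, A ≠ B → Disjoint (Q' A) (Q' B) := by
    intro A B hAB
    rw [Set.disjoint_left]
    intro t htA htB
    rcases hcase htA with hA | ⟨hA0, hAr⟩ <;> rcases hcase htB with hB | ⟨hB0, hBr⟩
    · obtain ⟨p, hp1, hp2⟩ := hA
      obtain ⟨q, hq1, hq2⟩ := hB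
      have hpq : p = q := hxinj (by rw [hp2, hq2])
      exact hAB (by rw [← hp1, hpq, hq1])
    · obtain ⟨p, _, hp2⟩ := hA
      exact hBr ⟨p, hp2⟩
    · obtain ⟨q, _, hq2⟩ := hB
      exact hAr ⟨q, hq2⟩
    · exact hAB (hA0.trans hB0.symm)
  have hQ'inj : Function.Injective Q' := by
    intro A B hABeq
    by_contra hne
    obtain ⟨t, ht⟩ := hQ'ne A
    exact (Set.disjoint_left.1 (hQ'disj A B hne)) ht (hABeq ▸ ht)
  refine ⟨Set.range Q', ?_, ?_, ?_, ?_⟩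
  · rw [Cardinal.mk_range_eq _ hQ'inj, Cardinal.mk_set, hα]
  · rintro Y ⟨A, rfl⟩; exact hQ'stat A
  · rintro Y ⟨A, rfl⟩ Z ⟨B, rfl⟩ hYZ
    exact hQ'disj A B fun h => hYZ (by rw [h])
  · apply Set.Subset.antisymm
    · apply Set.sUnion_subset
      rintro _ ⟨A, rfl⟩
      exact hQ'X A
    · intro t ht
      by_cases hr : t ∈ Set.range x
      · obtain ⟨p, rfl⟩ := hr
        exact ⟨Q' p.1, ⟨p.1, rfl⟩, hQQ' p.1 ⟨p, rfl, rfl⟩⟩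
      · refine ⟨Q' ∅, ⟨∅, rfl⟩, ?_⟩
        rw [hQ'def ∅, if_pos rfl]
        exact Or.inr ⟨ht, hr⟩
end

section
/- Let κ be regular uncountable and λ ≥ κ. For X ⊆ P_κ(λ), X is stationary if and only if for every function f : λ^{<ω} → P_κ(λ) there exists s ∈ X with ⋃ f''(s^{<ω}) ⊆ s. -/
open Cardinal Set

section Auxiliary

universe u
variable {β : Type u} {κ : Cardinal.{u}}

/-- A small union of small sets is small, for regular `κ`. -/
lemma smallUnion {ι : Type u} (hreg : κ.IsRegular) {A : ι → Set β}
    (hι : #ι < κ) (hA : ∀ i, #(A i) < κ) : #(⋃ i, A i) < κ :=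
  lt_of_le_of_lt mk_iUnion_le_sum_mk (Cardinal.sum_lt_of_isRegular hreg hι hA)

/-- Finitely many elements of a chain union lie in a common member. -/
lemma chain_list {D : Set (Set β)} (hch : IsChain (· ⊆ ·) D) (hne : D.Nonempty)
    (l : List β) (h : ∀ x ∈ l, x ∈ ⋃₀ D) : ∃ d ∈ D, ∀ x ∈ l, x ∈ d := by
  induction l with
  | nil => exact ⟨hne.choose, hne.choose_spec, by simp⟩
  | cons a l ih =>
    obtain ⟨d, hd, hld⟩ := ih (fun x hx => h x (List.mem_cons_of_mem _ hx))
    obtain ⟨e, he, hae⟩ := h a (List.mem_cons_self (a := a) (l := l))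
    rcases eq_or_ne d e with rfl | hde
    · refine ⟨d, hd, fun x hx => ?_⟩
      rcases List.mem_cons.1 hx with rfl | hx
      exacts [hae, hld x hx]
    · rcases hch hd he hde with hsub | hsub
      · refine ⟨e, he, fun x hx => ?_⟩
        rcases List.mem_cons.1 hx with rfl | hx
        exacts [hae, hsub (hld x hx)]
      · refine ⟨d, hd, fun x hx => ?_⟩
        rcases List.mem_cons.1 hx with rfl | hx
        exacts [hsub hae, hld x hx]

/-- The cardinality of the set of lists from a small set is small. -/
lemma mk_lists_lt (s : Set β) (hs : #s < κ) (hκ : ℵ₀ < κ) :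
    #{l : List β | ∀ x ∈ l, x ∈ s} < κ := by
  have hsurj : Function.Surjective
      (fun l : List s => (⟨l.map Subtype.val, by
        intro x hx
        obtain ⟨a, _, rfl⟩ := List.mem_map.1 hx
        exact a.2⟩ : {l : List β | ∀ x ∈ l, x ∈ s})) := by
    rintro ⟨l, hl⟩
    refine ⟨l.attach.map (fun x => ⟨x.1, hl x.1 x.2⟩), ?_⟩
    apply Subtype.ext
    simp [List.map_map, Function.comp]
  have h1 : #{l : List β | ∀ x ∈ l, x ∈ s} ≤ #(List s) := Cardinal.mk_le_of_surjective hsurj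
  have h2 : #(List s) < κ := by
    rcases isEmpty_or_nonempty s with h | h
    · exact lt_of_le_of_lt Cardinal.mk_le_aleph0 hκ
    · rw [Cardinal.mk_list_eq_max_mk_aleph0]
      exact max_lt hs hκ
  exact h1.trans_lt h2

/-- Unions of monotone families `g` over all finite subsets of a small infinite set
belong to any family `C` closed under small chain unions (provided all `g F ∈ C`). -/
lemma dirUnion (hreg : κ.IsRegular) (hunc : ℵ₀ < κ) {C : Set (Set β)}
    (hchain : ∀ D : Set (Set β), D ⊆ C → D.Nonempty → IsChain (· ⊆ ·) D → #D < κ → ⋃₀ D ∈ C)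
    {g : Finset β → Set β} (hgC : ∀ F, g F ∈ C)
    (hmono : ∀ F F' : Finset β, F ⊆ F' → g F ⊆ g F') :
    ∀ ν : Cardinal.{u}, ∀ t : Set β, #↑t = ν → t.Infinite → ν < κ →
      ⋃ F ∈ {F : Finset β | ↑F ⊆ t}, g F ∈ C := by
  classical
  intro ν
  induction ν using WellFoundedLT.induction with
  | ind ν IH =>
  intro t hν hinf hνκ
  subst hν
  have hinf' : Infinite ↑t := Set.infinite_coe_iff.2 hinf
  have h0 : ℵ₀ ≤ #↑t := Cardinal.aleph0_le_mk_iff.2 hinf'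
  rcases h0.lt_or_eq with h | h
  · -- uncountable case
    set ν := #↑t with hνdef
    set σ := ν.ord.ToType with hσ
    have hmkσ : #σ = ν := by rw [hσ, Cardinal.mk_toType, Cardinal.card_ord]
    have hneσ : Nonempty σ := by
      rw [hσ, Ordinal.toType_nonempty_iff_ne_zero]
      intro h0'
      have : ν = 0 := by rw [← Cardinal.card_ord ν, h0', Ordinal.card_zero]
      rw [this] at h
      exact absurd h (by simp)
    obtain ⟨b⟩ : Nonempty (σ ≃ ↑t) := Cardinal.eq.1 hmkσ
    set j : ℕ → β := fun n => ((Infinite.natEmbedding ↑t) n : β) with hj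
    have hjinj : Function.Injective j := fun m n hmn =>
      (Infinite.natEmbedding ↑t).injective (Subtype.ext hmn)
    set t0 : Set β := Set.range j with ht0
    have ht0t : t0 ⊆ t := by rintro x ⟨n, rfl⟩; exact ((Infinite.natEmbedding ↑t) n).2
    have ht0inf : t0.Infinite := Set.infinite_range_of_injective hjinj
    have ht0card : #↑t0 ≤ ℵ₀ := Cardinal.mk_le_aleph0_iff.2
      (Set.countable_coe_iff.1 (Set.countable_range j).to_subtype)
    set s : σ → Set β := fun y =>
      (insert (↑(b y)) ((fun x => (↑(b x) : β)) '' Set.Iio y)) ∪ t0 with hs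
    have hst : ∀ y, s y ⊆ t := by
      intro y x hx
      rcases hx with hx | hx
      · rcases hx with rfl | ⟨z, _, rfl⟩
        exacts [(b y).2, (b _).2]
      · exact ht0t hx
    have hsinf : ∀ y, (s y).Infinite := fun y => ht0inf.mono subset_union_right
    have hscard : ∀ y, #↑(s y) < ν := by
      intro y
      have h1 : #↑((fun x => (↑(b x) : β)) '' Set.Iio y) ≤ #↑(Set.Iio y) :=
        Cardinal.mk_image_le
      have h2 : #↑(Set.Iio y) < ν := Cardinal.mk_Iio_ord_toType y
      calc #↑(s y) ≤ #↑(insert (↑(b y)) ((fun x => (↑(b x) : β)) '' Set.Iio y)) + #↑t0 :=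
              Cardinal.mk_union_le _ _
        _ ≤ (#↑((fun x => (↑(b x) : β)) '' Set.Iio y) + 1) + #↑t0 := by
              gcongr; exact Cardinal.mk_insert_le
        _ < ν := by
              apply Cardinal.add_lt_of_lt h.le
              · apply Cardinal.add_lt_of_lt h.le (h1.trans_lt h2)
                exact lt_of_lt_of_le Cardinal.one_lt_aleph0 h.le
              · exact ht0card.trans_lt h
    have hsmono : ∀ y y' : σ, y ≤ y' → s y ⊆ s y' := by
      intro y y' hyy' x hx
      rcases hx with hx | hx
      · left
        rcases hx with rfl | ⟨z, hz, rfl⟩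
        · rcases eq_or_lt_of_le hyy' with rfl | hlt
          · exact Set.mem_insert _ _
          · exact Set.mem_insert_of_mem _ ⟨y, hlt, rfl⟩
        · exact Set.mem_insert_of_mem _ ⟨z, lt_of_lt_of_le hz hyy', rfl⟩
      · right; exact hx
    set U : σ → Set β := fun y => ⋃ F ∈ {F : Finset β | ↑F ⊆ s y}, g F with hU
    have hUC : ∀ y, U y ∈ C := fun y =>
      IH _ (hscard y) (s y) rfl (hsinf y) ((hscard y).trans hνκ)
    have hUmono : ∀ y y' : σ, y ≤ y' → U y ⊆ U y' := by
      intro y y' hyy'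
      apply Set.iUnion₂_subset
      intro F hF
      exact Set.subset_iUnion₂_of_subset F (hF.trans (hsmono y y' hyy')) (subset_refl _)
    have key : ⋃₀ (Set.range U) = ⋃ F ∈ {F : Finset β | ↑F ⊆ t}, g F := by
      apply subset_antisymm
      · rintro x ⟨_, ⟨y, rfl⟩, hx⟩
        rw [Set.mem_iUnion₂] at hx
        obtain ⟨F, hF, hxF⟩ := hx
        exact Set.mem_biUnion (hF.trans (hst y)) hxF
      · intro x hx
        simp only [Set.mem_iUnion, Set.mem_setOf_eq] at hx
        obtain ⟨F, hF, hxF⟩ := hx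
        rcases F.eq_empty_or_nonempty with rfl | hFne
        · exact ⟨U (Classical.arbitrary σ), ⟨_, rfl⟩,
            Set.mem_biUnion (by simp) hxF⟩
        · set y : σ := (F.attach.image fun z => b.symm ⟨z.1, hF z.2⟩).max'
            (by simpa using hFne) with hy
          refine ⟨U y, ⟨y, rfl⟩, Set.mem_biUnion (s := {F : Finset β | ↑F ⊆ s y}) ?_ hxF⟩
          intro z hz
          have hidx : b.symm ⟨z, hF hz⟩ ≤ y := by
            rw [hy]
            exact Finset.le_max' (F.attach.image fun w => b.symm ⟨w.1, hF w.2⟩) _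
              (Finset.mem_image.2 ⟨⟨z, hz⟩, F.mem_attach _, rfl⟩)
          left
          rcases hidx.lt_or_eq with hlt | heq
          · refine Set.mem_insert_of_mem _ ⟨b.symm ⟨z, hF hz⟩, hlt, ?_⟩
            simp
          · rw [← heq]; simp
    rw [← key]
    apply hchain
    · rintro _ ⟨y, rfl⟩; exact hUC y
    · exact ⟨U (Classical.arbitrary σ), _, rfl⟩
    · rintro _ ⟨y, rfl⟩ _ ⟨y', rfl⟩ _
      rcases le_total y y' with hle | hle
      exacts [Or.inl (hUmono _ _ hle), Or.inr (hUmono _ _ hle)]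
    · exact lt_of_le_of_lt Cardinal.mk_range_le (hmkσ ▸ hνκ)
  · -- countable case
    have hcnt : Countable ↑t := Cardinal.mk_le_aleph0_iff.1 h.ge
    obtain ⟨d⟩ := nonempty_denumerable ↑t
    set e : ↑t ≃ ℕ := Denumerable.eqv ↑t with he
    set F : ℕ → Finset β := fun n => (Finset.range (n + 1)).image (fun i => ((e.symm i : ↑t) : β))
      with hF
    have hFt : ∀ n, ↑(F n) ⊆ t := by
      intro n x hx
      simp only [hF, Finset.coe_image, Set.mem_image] at hx
      obtain ⟨i, _, rfl⟩ := hx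
      exact (e.symm i).2
    have hFmono : ∀ m n, m ≤ n → F m ⊆ F n := fun m n hmn =>
      Finset.image_subset_image (Finset.range_subset_range.2 (by omega))
    have key : ⋃₀ (Set.range fun n => g (F n)) = ⋃ G ∈ {G : Finset β | ↑G ⊆ t}, g G := by
      apply subset_antisymm
      · rintro x ⟨_, ⟨n, rfl⟩, hx⟩
        exact Set.mem_biUnion (hFt n) hx
      · intro x hx
        simp only [Set.mem_iUnion, Set.mem_setOf_eq] at hx
        obtain ⟨G, hG, hxG⟩ := hx
        set n : ℕ := G.attach.sup (fun z => e ⟨z.1, hG z.2⟩) with hn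
        refine ⟨g (F n), ⟨n, rfl⟩, hmono G (F n) ?_ hxG⟩
        intro z hz
        have hidx : e ⟨z, hG hz⟩ ≤ n := by
          rw [hn]
          exact Finset.le_sup (f := fun w : {x // x ∈ G} => e ⟨w.1, hG w.2⟩)
            (G.mem_attach ⟨z, hz⟩)
        simp only [hF, Finset.mem_image, Finset.mem_range]
        exact ⟨e ⟨z, hG hz⟩, by omega, by simp⟩
    rw [← key]
    apply hchain
    · rintro _ ⟨n, rfl⟩; exact hgC _
    · exact ⟨g (F 0), 0, rfl⟩
    · rintro _ ⟨m, rfl⟩ _ ⟨n, rfl⟩ _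
      rcases le_total m n with hle | hle
      exacts [Or.inl (hmono _ _ (hFmono _ _ hle)), Or.inr (hmono _ _ (hFmono _ _ hle))]
    · refine lt_of_le_of_lt ?_ hunc
      exact Cardinal.mk_le_aleph0_iff.2 (Set.countable_coe_iff.1
        (Set.countable_range _).to_subtype)

/-- The recursive Skolem-hull function on finite sets associated to a choice
function `T` and a seed set `N`. -/
noncomputable def gRec [DecidableEq β] (T : Set β → Set β) (N : Set β) :
    Finset β → Set β := fun F =>
  T ((↑F : Set β) ∪ N ∪ ⋃ F' ∈ (F.ssubsets : Set (Finset β)), gRec T N F')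
termination_by F => F.card
decreasing_by
  rename_i h
  simp only [Finset.mem_coe, Finset.mem_ssubsets] at h
  exact Finset.card_lt_card h

lemma gRec_spec [DecidableEq β] (hreg : κ.IsRegular) (hunc : ℵ₀ < κ)
    {C : Set (Set β)} (hCP : ∀ c ∈ C, #↑c < κ)
    {T : Set β → Set β} (hT : ∀ s : Set β, #↑s < κ → T s ∈ C ∧ s ⊆ T s)
    {N : Set β} (hN : #↑N < κ) :
    ∀ F : Finset β, gRec T N F ∈ C ∧ (↑F : Set β) ∪ N ⊆ gRec T N F ∧
      ∀ F' : Finset β, F' ⊆ F → gRec T N F' ⊆ gRec T N F := by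
  intro F
  induction F using Finset.strongInduction with
  | _ F IH =>
  set A : Set β := (↑F : Set β) ∪ N ∪ ⋃ F' ∈ (F.ssubsets : Set (Finset β)), gRec T N F'
    with hA
  have hAcard : #↑A < κ := by
    have h1 : #↑(F : Set β) < κ := lt_of_lt_of_le (by
      simpa using (Set.toFinite (F : Set β)).lt_aleph0) hunc.le
    have h2 : #↑(⋃ F' ∈ (F.ssubsets : Set (Finset β)), gRec T N F') < κ := by
      rw [Set.biUnion_eq_iUnion]
      apply smallUnion hreg
      · exact lt_of_lt_of_le ((Set.toFinite _).lt_aleph0) hunc.le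
      · rintro ⟨F', hF'⟩
        exact hCP _ (IH F' (Finset.mem_ssubsets.1 hF')).1
    calc #↑A ≤ (#↑((F : Set β) ∪ N)) + _ := Cardinal.mk_union_le _ _
      _ ≤ (#↑(F : Set β) + #↑N) + _ := by gcongr; exact Cardinal.mk_union_le _ _
      _ < κ := Cardinal.add_lt_of_lt hreg.aleph0_le
          (Cardinal.add_lt_of_lt hreg.aleph0_le h1 hN) h2
  have hgr : gRec T N F = T A := by rw [gRec]
  have hTA := hT A hAcard
  refine ⟨hgr ▸ hTA.1, ?_, ?_⟩
  · rw [hgr]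
    exact (Set.subset_union_left (t := ⋃ F' ∈ (F.ssubsets : Set (Finset β)),
      gRec T N F')).trans hTA.2
  · intro F' hsub
    rcases eq_or_ne F' F with rfl | hne
    · exact subset_refl _
    · have hss : F' ∈ (F.ssubsets : Set (Finset β)) := by
        simp only [Finset.mem_coe, Finset.mem_ssubsets]
        exact Finset.ssubset_iff_subset_ne.2 ⟨hsub, hne⟩
      rw [hgr]
      refine Set.Subset.trans ?_ hTA.2
      exact Set.Subset.trans (Set.subset_biUnion_of_mem hss) Set.subset_union_right

lemma list_level {S : ℕ → Set β} (hmono : ∀ m n : ℕ, m ≤ n → S m ⊆ S n) (l : List β)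
    (h : ∀ x ∈ l, x ∈ ⋃ n, S n) : ∃ n, ∀ x ∈ l, x ∈ S n := by
  induction l with
  | nil => exact ⟨0, by simp⟩
  | cons a l ih =>
    obtain ⟨n, hn⟩ := ih fun x hx => h x (List.mem_cons_of_mem _ hx)
    obtain ⟨m, hm⟩ := Set.mem_iUnion.1 (h a (List.mem_cons_self (a := a) (l := l)))
    refine ⟨max m n, fun x hx => ?_⟩
    rcases List.mem_cons.1 hx with rfl | hx
    exacts [hmono m _ (le_max_left m n) hm, hmono n _ (le_max_right m n) (hn x hx)]

/-- The set `C(f)` of `f`-closed small sets. -/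
def CfSet (κ : Cardinal.{u}) (f : List β → Set β) : Set (Set β) :=
  {s : Set β | #↑s < κ ∧ ∀ l : List β, (∀ x ∈ l, x ∈ s) → f l ⊆ s}

lemma CfSet_chain (hreg : κ.IsRegular) {f : List β → Set β}
    {D : Set (Set β)} (hD : D ⊆ CfSet κ f) (hne : D.Nonempty)
    (hch : IsChain (· ⊆ ·) D) (hcard : #↑D < κ) : ⋃₀ D ∈ CfSet κ f := by
  constructor
  · rw [Set.sUnion_eq_iUnion]
    exact smallUnion hreg hcard fun d => (hD d.2).1
  · intro l hl
    obtain ⟨d, hdD, hld⟩ := chain_list hch hne l hl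
    exact ((hD hdD).2 l hld).trans (Set.subset_sUnion_of_mem hdD)

lemma CfSet_cofinal (hreg : κ.IsRegular) (hunc : ℵ₀ < κ) {f : List β → Set β}
    (hf : ∀ l, #↑(f l) < κ) (s : Set β) (hs : #↑s < κ) :
    ∃ t ∈ CfSet κ f, s ⊆ t := by
  classical
  set S : ℕ → Set β := fun n =>
    Nat.rec s (fun _ Sn => Sn ∪ ⋃ l ∈ {l : List β | ∀ x ∈ l, x ∈ Sn}, f l) n with hS
  have hS0 : S 0 = s := rfl
  have hSsucc : ∀ n, S (n + 1) = S n ∪ ⋃ l ∈ {l : List β | ∀ x ∈ l, x ∈ S n}, f l :=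
    fun n => rfl
  have hcard : ∀ n, #↑(S n) < κ := by
    intro n
    induction n with
    | zero => exact hs
    | succ n ih =>
      rw [hSsucc]
      refine lt_of_le_of_lt (Cardinal.mk_union_le _ _)
        (Cardinal.add_lt_of_lt hreg.aleph0_le ih ?_)
      rw [Set.biUnion_eq_iUnion]
      exact smallUnion hreg (mk_lists_lt _ ih hunc) fun l => hf _
  have hstep : ∀ n, S n ⊆ S (n + 1) := by
    intro n; rw [hSsucc]; exact Set.subset_union_left
  have hmono : ∀ m n : ℕ, m ≤ n → S m ⊆ S n := fun m n h =>
    monotone_nat_of_le_succ hstep h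
  refine ⟨⋃ n, S n, ⟨?_, ?_⟩, ?_⟩
  · have huniv : ⋃ n, S n = ⋃ i : ULift.{u} ℕ, S i.down := by
      ext x
      simp only [Set.mem_iUnion]
      exact ⟨fun ⟨n, h⟩ => ⟨⟨n⟩, h⟩, fun ⟨i, h⟩ => ⟨i.down, h⟩⟩
    rw [huniv]
    exact smallUnion hreg (lt_of_le_of_lt Cardinal.mk_le_aleph0 hunc)
      fun i => hcard i.down
  · intro l hl
    obtain ⟨n, hn⟩ := list_level hmono l hl
    refine Set.Subset.trans ?_ (Set.subset_iUnion S (n + 1))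
    rw [hSsucc]
    exact (Set.subset_biUnion_of_mem (u := fun l => f l)
      (show l ∈ {l : List β | ∀ x ∈ l, x ∈ S n} from hn)).trans Set.subset_union_right
  · exact (hS0 ▸ Set.subset_iUnion S 0 : s ⊆ ⋃ n, S n)

end Auxiliary

/-- Let `κ` be regular uncountable and `λ ≥ κ`. A set `X ⊆ P_κ(λ)` is stationary iff
for every `f : λ^{<ω} → P_κ(λ)` there is `s ∈ X` with `⋃ f''(s^{<ω}) ⊆ s`
(i.e. the sets `C(f)` generate the club filter). -/
theorem stmt5 (κ lam : Cardinal) (hreg : κ.IsRegular) (hunc : ℵ₀ < κ)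
    (hkl : κ ≤ lam)
    (X : Set (Set lam.ord.ToType)) (hX : X ⊆ Pkl κ lam.ord) :
    IsStatK κ lam.ord X ↔
      ∀ f : List lam.ord.ToType → Set lam.ord.ToType,
        (∀ l, f l ∈ Pkl κ lam.ord) →
        ∃ s ∈ X, ∀ l : List lam.ord.ToType, (∀ x ∈ l, x ∈ s) → f l ⊆ s := by
  classical
  constructor
  · intro hstat f hf
    have hclub : IsClubK κ lam.ord (CfSet κ f) :=
      ⟨fun s hs => hs.1,
       fun D hD hne hch hcard => CfSet_chain hreg hD hne hch hcard,
       fun s hs => CfSet_cofinal hreg hunc (fun l => hf l) s hs⟩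
    obtain ⟨s, hsX, hsCf⟩ := hstat (CfSet κ f) hclub
    exact ⟨s, hsX, fun l hl => hsCf.2 l hl⟩
  · intro hprop C hC
    obtain ⟨hCP, hCchain, hCcof⟩ := hC
    set T : Set lam.ord.ToType → Set lam.ord.ToType := fun s => if h : ∃ t ∈ C, s ⊆ t then h.choose else s with hTdef
    have hT : ∀ s : Set lam.ord.ToType, #↑s < κ → T s ∈ C ∧ s ⊆ T s := by
      intro s hs
      have hex : ∃ t ∈ C, s ⊆ t := hCcof s hs
      simp only [hTdef, dif_pos hex]
      exact ⟨hex.choose_spec.1, hex.choose_spec.2⟩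
    have hinfβ : Infinite lam.ord.ToType := by
      rw [Cardinal.infinite_iff, Cardinal.mk_toType, Cardinal.card_ord]
      exact (hunc.trans_le hkl).le
    set N : Set lam.ord.ToType := Set.range (Infinite.natEmbedding lam.ord.ToType) with hNdef
    have hN : #↑N < κ :=
      lt_of_le_of_lt (Cardinal.mk_le_aleph0_iff.2
        (Set.countable_coe_iff.1 (Set.countable_range _).to_subtype)) hunc
    have hNinf : N.Infinite :=
      Set.infinite_range_of_injective (Infinite.natEmbedding lam.ord.ToType).injective
    have hg := gRec_spec hreg hunc (fun c hc => hCP hc) hT hN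
    obtain ⟨s, hsX, hscl⟩ := hprop (fun l => gRec T N l.toFinset)
      (fun l => hCP (hg l.toFinset).1)
    have hsP : #↑s < κ := hX hsX
    have hgs : ∀ F : Finset lam.ord.ToType, (↑F : Set lam.ord.ToType) ⊆ s → gRec T N F ⊆ s := by
      intro F hF
      have := hscl F.toList (fun x hx => hF (Finset.mem_coe.2 (Finset.mem_toList.1 hx)))
      simpa [Finset.toList_toFinset] using this
    have hsinf : s.Infinite := by
      refine hNinf.mono (Set.Subset.trans ?_ (hgs ∅ (by simp)))
      exact Set.Subset.trans Set.subset_union_right ((hg ∅).2.1)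
    have hkey : ⋃ F ∈ {F : Finset lam.ord.ToType | ↑F ⊆ s}, gRec T N F = s := by
      apply subset_antisymm
      · exact Set.iUnion₂_subset fun F hF => hgs F hF
      · intro z hz
        refine Set.mem_biUnion (s := {F : Finset lam.ord.ToType | ↑F ⊆ s})
          (x := ({z} : Finset lam.ord.ToType)) (by simpa using hz) ?_
        exact (hg {z}).2.1 (Or.inl (by simp))
    have hmem := dirUnion hreg hunc hCchain (fun F => (hg F).1)
      (fun F F' h => (hg F').2.2 F h) (#↑s) s rfl hsinf hsP
    rw [hkey] at hmem
    exact ⟨s, hsX, hmem⟩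
end

section
/- Let κ be regular uncountable and λ ≥ κ. A set X ⊆ {s ∈ P_κ(λ) : s ∩ κ ∈ κ} is stationary in P_κ(λ) if and only if for every function g : λ^{<ω} → λ there exists s ∈ X closed under g (i.e., g''(s^{<ω}) ⊆ s). -/
open Cardinal Set

/-- `s ∩ κ ∈ κ`: the intersection of `s` with (the copy of) `κ` is an initial
segment of `κ`, i.e. an ordinal `< κ`. -/
def InterKappaInKappa (κ : Cardinal) {o : Ordinal} (s : Set o.ToType) : Prop :=
  ∃ β : Ordinal, β < κ.ord ∧
    ∀ x : o.ToType, (x ∈ s ∧ ordAt x < κ.ord) ↔ ordAt x < β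

noncomputable def elemOf {o : Ordinal} (γ : Ordinal) (h : γ < o) : o.ToType :=
  (Ordinal.ToType.mk (o := o)) ⟨γ, h⟩

lemma ordAt_elemOf {o : Ordinal} (γ : Ordinal) (h : γ < o) : ordAt (elemOf γ h) = γ := by
  simp [ordAt, elemOf]

lemma ordAt_lt {o : Ordinal} (x : o.ToType) : ordAt x < o :=
  (((Ordinal.ToType.mk (o := o))).symm x).2

lemma elemOf_ordAt {o : Ordinal} (x : o.ToType) : elemOf (ordAt x) (ordAt_lt x) = x := by
  simp only [elemOf, ordAt]
  exact ((Ordinal.ToType.mk (o := o))).apply_symm_apply x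

/-- lift a list with entries in s to a list of the subtype -/
lemma exists_list_subtype {α : Type*} (s : Set α) :
    ∀ l : List α, (∀ x ∈ l, x ∈ s) → ∃ l' : List s, l'.map Subtype.val = l := by
  intro l
  induction l with
  | nil => exact fun _ => ⟨[], rfl⟩
  | cons a l ih =>
    intro h
    obtain ⟨l', hl'⟩ := ih (fun x hx => h x (List.mem_cons_of_mem a hx))
    exact ⟨⟨a, h a (List.mem_cons_self)⟩ :: l', by simp [hl']⟩

lemma mk_lists_in_lt {α : Type*} {κ : Cardinal} (hreg : κ.IsRegular) (hunc : ℵ₀ < κ)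
    (s : Set α) (hs : #s < κ) : #{l : List α | ∀ x ∈ l, x ∈ s} < κ := by
  have hsurj : Function.Surjective
      (fun l' : List s => (⟨l'.map Subtype.val, by
        intro x hx
        simp only [List.mem_map] at hx
        obtain ⟨y, _, rfl⟩ := hx
        exact y.2⟩ : {l : List α | ∀ x ∈ l, x ∈ s})) := by
    rintro ⟨l, hl⟩
    obtain ⟨l', hl'⟩ := exists_list_subtype s l hl
    exact ⟨l', by simp [hl']⟩
  calc #{l : List α | ∀ x ∈ l, x ∈ s} ≤ #(List s) := Cardinal.mk_le_of_surjective hsurj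
    _ ≤ max ℵ₀ #s := Cardinal.mk_list_le_max _
    _ < κ := max_lt hunc hs

/-- a finite list with entries in a chain union is inside one member -/
lemma chain_absorb {α : Type*} {D : Set (Set α)} (hch : IsChain (· ⊆ ·) D)
    (hne : D.Nonempty) : ∀ l : List α, (∀ x ∈ l, x ∈ ⋃₀ D) → ∃ t ∈ D, ∀ x ∈ l, x ∈ t := by
  intro l
  induction l with
  | nil => exact fun _ => ⟨hne.choose, hne.choose_spec, by simp⟩
  | cons a l ih =>
    intro h
    obtain ⟨t, htD, htl⟩ := ih (fun x hx => h x (List.mem_cons_of_mem a hx))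
    obtain ⟨u, huD, hau⟩ := h a (List.mem_cons_self)
    rcases eq_or_ne t u with rfl | hne'
    · exact ⟨t, htD, by intro x hx; rcases List.mem_cons.mp hx with rfl | hx
                        exacts [hau, htl x hx]⟩
    · rcases hch htD huD hne' with hsub | hsub
      · exact ⟨u, huD, by intro x hx; rcases List.mem_cons.mp hx with rfl | hx
                          exacts [hau, hsub (htl x hx)]⟩
      · exact ⟨t, htD, by intro x hx; rcases List.mem_cons.mp hx with rfl | hx
                          exacts [hsub hau, htl x hx]⟩

lemma mk_sUnion_lt {α : Type*} {κ : Cardinal} (hreg : κ.IsRegular) (hunc : ℵ₀ < κ)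
    {D : Set (Set α)} (hD : #D < κ) (h : ∀ t ∈ D, #t < κ) : #(⋃₀ D) < κ := by
  refine lt_of_le_of_lt (Cardinal.mk_sUnion_le D) ?_
  rcases D.eq_empty_or_nonempty with rfl | hne
  · simpa using hreg.pos.trans_le (le_refl _) |>.trans_le (le_refl _) |> fun _ =>
      (by simpa using hreg.pos : (0:Cardinal) < κ)
  · exact Cardinal.mul_lt_of_lt hunc.le hD
      (Cardinal.iSup_lt_of_isRegular hreg hD (fun t => h t t.2))

lemma isClubK_closurePoints {κ : Cardinal} (hreg : κ.IsRegular) (hunc : ℵ₀ < κ)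
    {o : Ordinal} (g : List o.ToType → o.ToType) :
    IsClubK κ o {s | s ∈ Pkl κ o ∧ ∀ l : List o.ToType, (∀ x ∈ l, x ∈ s) → g l ∈ s} := by
  refine ⟨fun s hs => hs.1, ?_, ?_⟩
  · intro D hD hne hch hcard
    refine ⟨mk_sUnion_lt hreg hunc hcard (fun t ht => (hD ht).1), ?_⟩
    intro l hl
    obtain ⟨t, htD, hlt⟩ := chain_absorb hch hne l hl
    exact ⟨t, htD, (hD htD).2 l hlt⟩
  · intro s hs
    set c : ℕ → Set o.ToType := fun n =>
      Nat.rec (s ∪ {g []}) (fun _ prev => prev ∪ g '' {l | ∀ x ∈ l, x ∈ prev}) n with hc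
    have hmono : ∀ m n, m ≤ n → c m ⊆ c n := fun m n h =>
      monotone_nat_of_le_succ (fun k => (subset_union_left : c k ⊆ c k ∪ _)) h
    have hcard : ∀ n, #(c n) < κ := by
      intro n
      induction n with
      | zero =>
        refine lt_of_le_of_lt (mk_union_le _ _) ?_
        refine Cardinal.add_lt_of_lt hunc.le hs ?_
        exact lt_of_lt_of_le (by simp) hunc.le
      | succ n ih =>
        refine lt_of_le_of_lt (mk_union_le _ _) ?_
        refine Cardinal.add_lt_of_lt hunc.le ih ?_
        exact lt_of_le_of_lt Cardinal.mk_image_le (mk_lists_in_lt hreg hunc _ ih)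
    refine ⟨⋃ n, c n, ⟨?_, ?_⟩, ?_⟩
    · have huni : ⋃ n, c n = ⋃ n : ULift.{_} ℕ, c n.down := by
        ext x
        simp only [mem_iUnion]
        exact ⟨fun ⟨n, h⟩ => ⟨⟨n⟩, h⟩, fun ⟨n, h⟩ => ⟨n.down, h⟩⟩
      rw [huni]
      refine lt_of_le_of_lt (Cardinal.mk_iUnion_le _) ?_
      refine Cardinal.mul_lt_of_lt hunc.le (by simpa using hunc) ?_
      exact Cardinal.iSup_lt_of_isRegular hreg (by simpa using hunc) (fun i => hcard i.down)
    · intro l hl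
      have : ∃ n, ∀ x ∈ l, x ∈ c n := by
        induction l with
        | nil => exact ⟨0, by simp⟩
        | cons a l ih =>
          obtain ⟨n₁, hn₁⟩ := ih (fun x hx => hl x (List.mem_cons_of_mem a hx))
          obtain ⟨n₂, hn₂⟩ := mem_iUnion.mp (hl a (List.mem_cons_self))
          refine ⟨max n₁ n₂, ?_⟩
          intro x hx
          rcases List.mem_cons.mp hx with rfl | hx
          · exact hmono n₂ _ (le_max_right _ _) hn₂
          · exact hmono n₁ _ (le_max_left _ _) (hn₁ x hx)
      obtain ⟨n, hn⟩ := this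
      exact mem_iUnion.mpr ⟨n + 1, Or.inr ⟨l, hn, rfl⟩⟩
    · exact subset_trans (subset_union_left) (subset_iUnion c 0)

lemma directed_sUnion_mem {α : Type*} {κ : Cardinal} (hreg : κ.IsRegular) (hunc : ℵ₀ < κ)
    {C : Set (Set α)}
    (hchain : ∀ D : Set (Set α), D ⊆ C → D.Nonempty → IsChain (· ⊆ ·) D → #D < κ → ⋃₀ D ∈ C)
    (μ : Cardinal) :
    μ < κ → ∀ D : Set (Set α), D ⊆ C → D.Nonempty →
      (∀ a ∈ D, ∀ b ∈ D, ∃ c ∈ D, a ⊆ c ∧ b ⊆ c) → #D ≤ μ → ⋃₀ D ∈ C := by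
  induction μ using WellFoundedLT.induction with
  | _ μ IH =>
  intro hμκ D hDC hne hdir hcard
  have hu : ∀ a : D, ∀ b : D, ∃ c : D, (a : Set α) ⊆ c ∧ (b : Set α) ⊆ c := by
    rintro ⟨a, ha⟩ ⟨b, hb⟩
    obtain ⟨c, hc, h1, h2⟩ := hdir a ha b hb
    exact ⟨⟨c, hc⟩, h1, h2⟩
  choose u hu1 hu2 using hu
  haveI : Nonempty D := hne.to_subtype
  by_cases hcnt : #D ≤ ℵ₀
  · -- countable case : build an ω-chain
    haveI : Countable D := mk_le_aleph0_iff.mp hcnt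
    obtain ⟨d, hd⟩ := exists_surjective_nat D
    set cseq : ℕ → D := fun n => Nat.rec (d 0) (fun m prev => u prev (d (m + 1))) n with hcseq
    have hmono : ∀ m n, m ≤ n → (cseq m : Set α) ⊆ (cseq n : Set α) := fun m n h =>
      monotone_nat_of_le_succ (f := fun n => (cseq n : Set α)) (fun k => hu1 _ _) h
    have hdn : ∀ n, (d n : Set α) ⊆ (cseq n : Set α) := by
      intro n
      cases n with
      | zero => exact subset_rfl
      | succ m => exact hu2 _ _
    have hEeq : ⋃₀ (range fun n => (cseq n : Set α)) = ⋃₀ D := by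
      apply subset_antisymm
      · refine sUnion_subset ?_
        rintro t ⟨n, rfl⟩
        exact subset_sUnion_of_mem (cseq n).2
      · refine sUnion_subset ?_
        intro t ht
        obtain ⟨n, hn⟩ := hd ⟨t, ht⟩
        refine subset_trans ?_ (subset_sUnion_of_mem ⟨n, rfl⟩)
        rw [show t = (d n : Set α) from (congrArg Subtype.val hn).symm]
        exact hdn n
    rw [← hEeq]
    refine hchain _ ?_ ⟨_, ⟨0, rfl⟩⟩ ?_ ?_
    · rintro t ⟨n, rfl⟩; exact hDC (cseq n).2
    · rintro t ⟨m, rfl⟩ t' ⟨n, rfl⟩ _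
      rcases le_total m n with h | h
      · exact Or.inl (hmono m n h)
      · exact Or.inr (hmono n m h)
    · exact lt_of_le_of_lt (le_aleph0_iff_set_countable.mpr (countable_range _)) hunc
  · -- uncountable case
    push_neg at hcnt
    obtain ⟨r, wo, hr⟩ := Cardinal.ord_eq ↥D
    haveI := wo
    -- closure of a set of indices under the upper-bound function
    let it : Set ↥D → ℕ → Set ↥D := fun G n => Nat.rec G (fun _ p => p ∪ image2 u p p) n
    let cl : Set ↥D → Set ↥D := fun G => ⋃ n, it G n
    have hit_mono_n : ∀ G n, it G n ⊆ it G (n + 1) := fun G n => subset_union_left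
    have hG_cl : ∀ G, G ⊆ cl G := fun G => subset_iUnion (it G) 0
    have hcl_u : ∀ G, ∀ a ∈ cl G, ∀ b ∈ cl G, u a b ∈ cl G := by
      intro G a ha b hb
      obtain ⟨m, hm⟩ := mem_iUnion.mp ha
      obtain ⟨n, hn⟩ := mem_iUnion.mp hb
      have h1 : a ∈ it G (max m n) :=
        monotone_nat_of_le_succ (hit_mono_n G) (le_max_left m n) hm
      have h2 : b ∈ it G (max m n) :=
        monotone_nat_of_le_succ (hit_mono_n G) (le_max_right m n) hn
      exact mem_iUnion.mpr ⟨max m n + 1, Or.inr (mem_image2_of_mem h1 h2)⟩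
    have hcl_mono : ∀ G G', G ⊆ G' → cl G ⊆ cl G' := by
      intro G G' hGG'
      have : ∀ n, it G n ⊆ it G' n := by
        intro n
        induction n with
        | zero => exact hGG'
        | succ n ih => exact union_subset_union ih (image2_subset ih ih)
      exact iUnion_mono this
    have hcl_card : ∀ G : Set ↥D, #G < #D → #(cl G) < #D := by
      intro G hG
      have hM : max ℵ₀ #G < #D := max_lt hcnt hG
      have hMinf : ℵ₀ ≤ max ℵ₀ #G := le_max_left _ _
      have hitc : ∀ n, #(↥(it G n)) ≤ max ℵ₀ #G := by
        intro n
        induction n with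
        | zero => exact le_max_right _ _
        | succ n ih =>
          calc #(↥(it G (n+1))) ≤ #(↥(it G n)) + #(↥(image2 u (it G n) (it G n))) := mk_union_le _ _
            _ ≤ max ℵ₀ #G + max ℵ₀ #G * max ℵ₀ #G := by
                refine add_le_add ih (le_trans mk_image2_le (mul_le_mul' ih ih))
            _ = max ℵ₀ #G := by rw [Cardinal.mul_eq_self hMinf, Cardinal.add_eq_self hMinf]
      calc #(cl G) ≤ ℵ₀ * ⨆ n : ULift.{_} ℕ, #(↥(it G n.down)) := by
            have : cl G = ⋃ n : ULift.{_} ℕ, it G n.down := by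
              ext x
              simp only [cl, mem_iUnion]
              exact ⟨fun ⟨n, h⟩ => ⟨⟨n⟩, h⟩, fun ⟨n, h⟩ => ⟨n.down, h⟩⟩
            rw [this]
            refine le_trans (Cardinal.mk_iUnion_le _) ?_
            gcongr
            simp
        _ ≤ max ℵ₀ #G * max ℵ₀ #G := by
            refine mul_le_mul' (le_max_left _ _) ?_
            exact ciSup_le' fun n => hitc n.down
        _ = max ℵ₀ #G := Cardinal.mul_eq_self hMinf
        _ < #D := hM
    -- the pieces
    let G : ↥D → Set ↥D := fun x => {y | r y x} ∪ {x}
    let Dx : ↥D → Set (Set α) := fun x => Subtype.val '' cl (G x)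
    have hGcard : ∀ x, #(G x) < #D := by
      intro x
      refine lt_of_le_of_lt (mk_union_le _ _) ?_
      refine Cardinal.add_lt_of_lt hcnt.le ?_ ?_
      · have := Cardinal.card_typein_lt (r := r) x hr
        exact this
      · exact lt_of_lt_of_le (by simp) hcnt.le
    have hDxD : ∀ x, Dx x ⊆ D := by
      rintro x t ⟨a, _, rfl⟩; exact a.2
    have hxDx : ∀ x : ↥D, (x : Set α) ∈ Dx x := by
      intro x
      exact ⟨x, hG_cl _ (Or.inr rfl), rfl⟩
    have hDxdir : ∀ x, ∀ a ∈ Dx x, ∀ b ∈ Dx x, ∃ c ∈ Dx x, a ⊆ c ∧ b ⊆ c := by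
      rintro x a ⟨a', ha', rfl⟩ b ⟨b', hb', rfl⟩
      exact ⟨u a' b', ⟨u a' b', hcl_u _ _ ha' _ hb', rfl⟩, hu1 a' b', hu2 a' b'⟩
    have hUx : ∀ x, ⋃₀ (Dx x) ∈ C := by
      intro x
      have hcard' : #(Dx x) < #D :=
        lt_of_le_of_lt mk_image_le (hcl_card _ (hGcard x))
      have hlt : #(Dx x) < μ := lt_of_lt_of_le hcard' hcard
      exact IH #(Dx x) hlt (lt_trans hlt hμκ)
        (Dx x) (subset_trans (hDxD x) hDC) ⟨_, hxDx x⟩ (hDxdir x) le_rfl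
    -- assemble the chain
    have hGmono : ∀ x y : ↥D, r x y → G x ⊆ G y := by
      intro x y hxy z hz
      rcases hz with hz | hz
      · exact Or.inl (_root_.trans hz hxy)
      · rw [mem_singleton_iff] at hz
        subst hz
        exact Or.inl hxy
    have hDxmono : ∀ x y : ↥D, r x y → Dx x ⊆ Dx y := by
      intro x y hxy
      exact image_mono (hcl_mono _ _ (hGmono x y hxy))
    have hEeq : ⋃₀ (range fun x : ↥D => ⋃₀ (Dx x)) = ⋃₀ D := by
      apply subset_antisymm
      · refine sUnion_subset ?_
        rintro t ⟨x, rfl⟩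
        exact sUnion_subset_sUnion (hDxD x)
      · refine sUnion_subset ?_
        intro t ht
        refine subset_trans (subset_sUnion_of_mem (hxDx ⟨t, ht⟩)) ?_
        exact subset_sUnion_of_mem ⟨⟨t, ht⟩, rfl⟩
    rw [← hEeq]
    refine hchain _ ?_ ?_ ?_ ?_
    · rintro t ⟨x, rfl⟩; exact hUx x
    · exact ⟨_, Classical.arbitrary ↥D, rfl⟩
    · rintro t ⟨x, rfl⟩ t' ⟨y, rfl⟩ _
      rcases trichotomous_of r x y with h | h | h
      · exact Or.inl (sUnion_subset_sUnion (hDxmono x y h))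
      · rw [h]; exact Or.inl subset_rfl
      · exact Or.inr (sUnion_subset_sUnion (hDxmono y x h))
    · refine lt_of_le_of_lt mk_range_le ?_
      exact lt_of_le_of_lt hcard hμκ

section B
variable (κ lam : Cardinal) (C : Set (Set lam.ord.ToType))

open scoped Classical in
noncomputable def qc : Set lam.ord.ToType → Set lam.ord.ToType := fun a =>
  if h : ∃ t, t ∈ C ∧ a ⊆ t then h.choose else a

open scoped Classical in
lemma qc_spec (hC : IsClubK κ lam.ord C) {a} (ha : a ∈ Pkl κ lam.ord) :
    qc lam C a ∈ C ∧ a ⊆ qc lam C a := by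
  obtain ⟨t, htC, hat⟩ := hC.2.2 a ha
  have h : ∃ t, t ∈ C ∧ a ⊆ t := ⟨t, htC, hat⟩
  rw [qc, dif_pos h]
  exact ⟨h.choose_spec.1, h.choose_spec.2⟩

noncomputable def Fm (e : Finset lam.ord.ToType) : Set lam.ord.ToType :=
  qc lam C ((↑e : Set lam.ord.ToType) ∪ ⋃ (e' : Finset lam.ord.ToType) (_ : e' ⊂ e), Fm e')
termination_by e.card
decreasing_by exact Finset.card_lt_card (by assumption)

lemma Fm_spec (hC : IsClubK κ lam.ord C) (hreg : κ.IsRegular) (hunc : ℵ₀ < κ) :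
    ∀ e : Finset lam.ord.ToType,
      Fm lam C e ∈ C ∧ (↑e : Set lam.ord.ToType) ⊆ Fm lam C e ∧
        ∀ e', e' ⊂ e → Fm lam C e' ⊆ Fm lam C e := by
  intro e
  induction e using Finset.strongInduction with
  | _ e IH =>
  have hUeq : (⋃ (e' : Finset lam.ord.ToType) (_ : e' ⊂ e), Fm lam C e')
      = ⋃₀ (Fm lam C '' {e' | e' ⊂ e}) := by
    rw [sUnion_image]
    rfl
  have harg : ((↑e : Set lam.ord.ToType) ∪
      ⋃ (e' : Finset lam.ord.ToType) (_ : e' ⊂ e), Fm lam C e') ∈ Pkl κ lam.ord := by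
    have hS : #({e' : Finset lam.ord.ToType | e' ⊂ e}) < ℵ₀ := by
      have : {e' : Finset lam.ord.ToType | e' ⊂ e}.Finite := by
        apply Set.Finite.subset (e.powerset.finite_toSet)
        intro e' he'
        simpa [Finset.mem_powerset] using he'.1
      exact this.lt_aleph0
    have hcard : #(Fm lam C '' {e' | e' ⊂ e}) < κ :=
      lt_of_le_of_lt mk_image_le (hS.trans hunc)
    refine lt_of_le_of_lt (mk_union_le _ _) (Cardinal.add_lt_of_lt hunc.le
      ((finset_card_lt_aleph0 e).trans hunc) ?_)
    rw [hUeq]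
    refine mk_sUnion_lt hreg hunc hcard ?_
    rintro t ⟨e', he', rfl⟩
    exact hC.1 (IH e' he').1
  have hq := qc_spec κ lam C hC harg
  rw [Fm]
  refine ⟨hq.1, subset_trans subset_union_left hq.2, ?_⟩
  intro e' he'
  refine subset_trans ?_ hq.2
  refine subset_trans ?_ subset_union_right
  exact subset_iUnion₂ (s := fun e' (_ : e' ⊂ e) => Fm lam C e') e' he'

lemma Fm_mono (hC : IsClubK κ lam.ord C) (hreg : κ.IsRegular) (hunc : ℵ₀ < κ)
    {e₁ e₂ : Finset lam.ord.ToType} (h : e₁ ⊆ e₂) : Fm lam C e₁ ⊆ Fm lam C e₂ := by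
  rcases eq_or_ne e₁ e₂ with rfl | hne
  · exact subset_rfl
  · exact (Fm_spec κ lam C hC hreg hunc e₂).2.2 e₁ (Finset.ssubset_iff_subset_ne.mpr ⟨h, hne⟩)

noncomputable def deltaOrd (e : Finset lam.ord.ToType) : Ordinal := (#(Fm lam C e)).ord

noncomputable def enumF (e : Finset lam.ord.ToType) :
    (deltaOrd lam C e).ToType ≃ ↥(Fm lam C e) :=
  Classical.choice (Cardinal.eq.mp ((Cardinal.mk_toType _).trans (Cardinal.card_ord _)))

noncomputable def gB (hsm : ∀ e, #(Fm lam C e) < κ) (hko : κ.ord ≤ lam.ord)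
    (h0 : (0 : Ordinal) < lam.ord) : List lam.ord.ToType → lam.ord.ToType := fun l =>
  match l with
  | [] => elemOf 0 h0
  | x :: xs =>
    if Odd (x :: xs : List lam.ord.ToType).length then
      elemOf (deltaOrd lam C (x :: xs).toFinset)
        (lt_of_lt_of_le (Cardinal.ord_lt_ord.mpr (hsm _)) hko)
    else
      if h : ordAt x < deltaOrd lam C xs.toFinset then
        ((enumF lam C xs.toFinset) (Ordinal.ToType.mk ⟨ordAt x, h⟩) : lam.ord.ToType)
      else elemOf 0 h0

end B

section B2
variable (κ lam : Cardinal) (C : Set (Set lam.ord.ToType))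

lemma exists_odd_list (s : Set lam.ord.ToType) (e : Finset lam.ord.ToType)
    (hes : ↑e ⊆ s) (hene : e.Nonempty) :
    ∃ l : List lam.ord.ToType, l ≠ [] ∧ Odd l.length ∧ l.toFinset = e ∧ ∀ x ∈ l, x ∈ s := by
  obtain ⟨a, ha⟩ := hene
  by_cases h : Odd e.toList.length
  · refine ⟨e.toList, ?_, h, by simp, fun x hx => hes (by simpa using hx)⟩
    intro hnil
    simp [hnil] at h
  · refine ⟨a :: e.toList, by simp, ?_, ?_, ?_⟩
    · simpa [Nat.odd_add_one] using h
    · simp [Finset.insert_eq_self.mpr ha]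
    · intro x hx
      rcases List.mem_cons.mp hx with rfl | hx
      · exact hes ha
      · exact hes (by simpa using hx)

lemma Fm_subset_of_closed (hC : IsClubK κ lam.ord C) (hreg : κ.IsRegular) (hunc : ℵ₀ < κ)
    (hsm : ∀ e, #(Fm lam C e) < κ) (hko : κ.ord ≤ lam.ord) (h0 : (0 : Ordinal) < lam.ord)
    (s : Set lam.ord.ToType)
    (hcl : ∀ l : List lam.ord.ToType, (∀ x ∈ l, x ∈ s) → gB κ lam C hsm hko h0 l ∈ s)
    (β : Ordinal) (hβ : β < κ.ord)
    (hiff : ∀ x : lam.ord.ToType, (x ∈ s ∧ ordAt x < κ.ord) ↔ ordAt x < β)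
    (e : Finset lam.ord.ToType) (hes : ↑e ⊆ s) (hene : e.Nonempty) :
    Fm lam C e ⊆ s := by
  obtain ⟨l, hl0, hlodd, hlfin, hlents⟩ := exists_odd_list lam s e hes hene
  subst hlfin
  have hδκ : deltaOrd lam C l.toFinset < κ.ord := Cardinal.ord_lt_ord.mpr (hsm _)
  have hdl : deltaOrd lam C l.toFinset < lam.ord := lt_of_lt_of_le hδκ hko
  -- the delta code is in s
  have hδs : elemOf (deltaOrd lam C l.toFinset) hdl ∈ s := by
    have hval := hcl l hlents
    cases l with
    | nil => exact absurd rfl hl0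
    | cons x xs =>
      rw [gB, if_pos hlodd] at hval
      exact hval
  have hδβ : deltaOrd lam C l.toFinset < β := by
    have := (hiff _).mp ⟨hδs, by rw [ordAt_elemOf]; exact hδκ⟩
    rwa [ordAt_elemOf] at this
  intro y hy
  set j := (enumF lam C l.toFinset).symm ⟨y, hy⟩ with hj
  set ξ : Ordinal :=
    ((Ordinal.ToType.mk (o := deltaOrd lam C l.toFinset)).symm j : Set.Iio _).1 with hξdef
  have hξ : ξ < deltaOrd lam C l.toFinset :=
    ((Ordinal.ToType.mk (o := deltaOrd lam C l.toFinset)).symm j).2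
  have hxl : ξ < lam.ord := lt_trans hξ hdl
  set x := elemOf ξ hxl with hx
  have hxs : x ∈ s := by
    refine ((hiff x).mpr ?_).1
    rw [hx, ordAt_elemOf]
    exact lt_trans hξ hδβ
  have hents : ∀ z ∈ x :: l, z ∈ s := by
    intro z hz
    rcases List.mem_cons.mp hz with rfl | hz
    · exact hxs
    · exact hlents z hz
  have hval := hcl (x :: l) hents
  cases l with
  | nil => exact absurd rfl hl0
  | cons x₀ xs =>
    have hnotodd : ¬ Odd (x :: x₀ :: xs : List lam.ord.ToType).length := by
      simp only [List.length_cons] at hlodd ⊢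
      simpa [Nat.odd_add_one] using hlodd
    rw [gB, if_neg hnotodd] at hval
    have hcond : ordAt x < deltaOrd lam C (x₀ :: xs).toFinset := by
      rw [hx, ordAt_elemOf]
      exact hξ
    rw [dif_pos hcond] at hval
    have h1 : (Ordinal.ToType.mk (o := deltaOrd lam C (x₀ :: xs).toFinset))
        ⟨ordAt x, hcond⟩ = j := by
      have h2 : (⟨ordAt x, hcond⟩ : Set.Iio (deltaOrd lam C (x₀ :: xs).toFinset))
          = (Ordinal.ToType.mk (o := deltaOrd lam C (x₀ :: xs).toFinset)).symm j := by
        refine Subtype.ext ?_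
        show ordAt x = ξ
        rw [hx, ordAt_elemOf]
      calc (Ordinal.ToType.mk (o := deltaOrd lam C (x₀ :: xs).toFinset)) ⟨ordAt x, hcond⟩
          = (Ordinal.ToType.mk (o := deltaOrd lam C (x₀ :: xs).toFinset))
            ((Ordinal.ToType.mk (o := deltaOrd lam C (x₀ :: xs).toFinset)).symm j) :=
            congrArg _ h2
        _ = j := OrderIso.apply_symm_apply _ _
    rw [h1, hj, Equiv.apply_symm_apply] at hval
    exact hval

end B2


/-- (Foreman–Magidor–Shelah, Lemma 0.) Let `κ` be regular uncountable and `λ ≥ κ`.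
A set `X ⊆ {s ∈ P_κ(λ) : s ∩ κ ∈ κ}` is stationary in `P_κ(λ)` iff for every
`g : λ^{<ω} → λ` there is `s ∈ X` closed under `g`. -/
theorem stmt6 (κ lam : Cardinal) (hreg : κ.IsRegular) (hunc : ℵ₀ < κ)
    (hkl : κ ≤ lam)
    (X : Set (Set lam.ord.ToType))
    (hX : X ⊆ {s | s ∈ Pkl κ lam.ord ∧ InterKappaInKappa κ s}) :
    IsStatK κ lam.ord X ↔
      ∀ g : List lam.ord.ToType → lam.ord.ToType,
        ∃ s ∈ X, ∀ l : List lam.ord.ToType, (∀ x ∈ l, x ∈ s) → g l ∈ s := by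
  have hko : κ.ord ≤ lam.ord := Cardinal.ord_le_ord.mpr hkl
  have h0 : (0 : Ordinal) < lam.ord := by
    have h1 : (0 : Cardinal) < lam := lt_of_lt_of_le (aleph0_pos.trans hunc) hkl
    have h2 := Cardinal.ord_lt_ord.mpr h1
    rwa [Cardinal.ord_zero] at h2
  constructor
  · intro hstat g
    obtain ⟨s, hsX, hsC⟩ := hstat _ (isClubK_closurePoints hreg hunc g)
    exact ⟨s, hsX, hsC.2⟩
  · intro H C hC
    have hsm : ∀ e, #(Fm lam C e) < κ := fun e => hC.1 (Fm_spec κ lam C hC hreg hunc e).1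
    obtain ⟨s, hsX, hscl⟩ := H (gB κ lam C hsm hko h0)
    obtain ⟨hsP, hIK⟩ := hX hsX
    obtain ⟨β, hβ, hiff⟩ := hIK
    have hsne : s.Nonempty := ⟨_, hscl [] (by simp)⟩
    set D := Fm lam C '' {e : Finset lam.ord.ToType | ↑e ⊆ s ∧ e.Nonempty} with hD
    have hDC : D ⊆ C := by
      rintro t ⟨e, _, rfl⟩
      exact (Fm_spec κ lam C hC hreg hunc e).1
    have hDne : D.Nonempty := by
      obtain ⟨a, ha⟩ := hsne
      exact ⟨_, ⟨{a}, ⟨by simpa using ha, Finset.singleton_nonempty a⟩, rfl⟩⟩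
    have hdir : ∀ a ∈ D, ∀ b ∈ D, ∃ c ∈ D, a ⊆ c ∧ b ⊆ c := by
      rintro t ⟨e1, he1, rfl⟩ t' ⟨e2, he2, rfl⟩
      refine ⟨Fm lam C (e1 ∪ e2), ⟨e1 ∪ e2, ⟨?_, he1.2.mono Finset.subset_union_left⟩, rfl⟩,
        Fm_mono κ lam C hC hreg hunc Finset.subset_union_left,
        Fm_mono κ lam C hC hreg hunc Finset.subset_union_right⟩
      rw [Finset.coe_union]
      exact union_subset he1.1 he2.1
    have hcard : #D < κ := by
      have h₁ : #D ≤ #({e : Finset lam.ord.ToType | ↑e ⊆ s ∧ e.Nonempty}) := mk_image_le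
      have h₂ : #({e : Finset lam.ord.ToType | ↑e ⊆ s ∧ e.Nonempty})
          ≤ #({e : Finset lam.ord.ToType | ↑e ⊆ s}) :=
        Cardinal.mk_le_mk_of_subset (fun e h => h.1)
      have h₃ : #({e : Finset lam.ord.ToType | ↑e ⊆ s}) ≤ #(List s) := by
        refine Cardinal.mk_le_of_surjective (f := fun l : List s =>
          (⟨(l.map Subtype.val).toFinset, by
            intro x hx
            simp only [Finset.mem_coe, List.mem_toFinset, List.mem_map] at hx
            obtain ⟨y, _, rfl⟩ := hx
            exact y.2⟩ : {e : Finset lam.ord.ToType | ↑e ⊆ s})) ?_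
        rintro ⟨e, he⟩
        obtain ⟨l', hl'⟩ := exists_list_subtype s e.toList
          (fun x hx => he (by simpa using hx))
        refine ⟨l', Subtype.ext ?_⟩
        simp only [hl']
        exact Finset.toList_toFinset e
      have h₄ : #(List s) ≤ max ℵ₀ #s := Cardinal.mk_list_le_max _
      exact lt_of_le_of_lt (h₁.trans (h₂.trans (h₃.trans h₄))) (max_lt hunc hsP)
    have hUD : ⋃₀ D = s := by
      apply subset_antisymm
      · apply sUnion_subset
        rintro t ⟨e, he, rfl⟩
        exact Fm_subset_of_closed κ lam C hC hreg hunc hsm hko h0 s hscl β hβ hiff e he.1 he.2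
      · intro x hx
        refine mem_sUnion.mpr ⟨Fm lam C {x},
          ⟨{x}, ⟨by simpa using hx, Finset.singleton_nonempty x⟩, rfl⟩, ?_⟩
        exact (Fm_spec κ lam C hC hreg hunc {x}).2.1 (by simp)
    have hmem := directed_sUnion_mem hreg hunc hC.2.1 #D hcard D hDC hDne hdir le_rfl
    rw [hUD] at hmem
    exact ⟨s, hsX, hmem⟩
end

section
/- Let κ be regular uncountable and δ < κ a cardinal with δ⁺ < κ. Then the set {α < κ : cf(α) = ℵ₀} can be partitioned into δ⁺ pairwise disjoint stationary subsets of κ. -/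
open Cardinal Set Ordinal

universe u

namespace SolovayAux

/-- Club subsets of ordinals below `k`. -/
def Club (k : Ordinal.{u}) (C : Set Ordinal.{u}) : Prop :=
  (∀ a < k, ∃ c ∈ C, c < k ∧ a ≤ c) ∧
  ∀ a < k, (∃ c ∈ C, c < a) → (∀ b < a, ∃ c ∈ C, b < c ∧ c < a) → a ∈ C

def Stat (k : Ordinal.{u}) (S : Set Ordinal.{u}) : Prop :=
  ∀ C, Club k C → (S ∩ C).Nonempty

/-- least element of `C` below `k` and above `b`. -/
noncomputable def pick (k : Ordinal.{u}) (C : Set Ordinal.{u}) (b : Ordinal.{u}) : Ordinal.{u} :=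
  sInf {c | c ∈ C ∧ c < k ∧ b ≤ c}

theorem pick_spec {k C : _} {b : Ordinal.{u}} (hC : Club k C) (hb : b < k) :
    pick k C b ∈ C ∧ pick k C b < k ∧ b ≤ pick k C b := by
  obtain ⟨c, hc, hck, hbc⟩ := hC.1 b hb
  exact csInf_mem (s := {c | c ∈ C ∧ c < k ∧ b ≤ c}) ⟨c, hc, hck, hbc⟩

/-- The core builder: iterate `next` ω times from `a` and take the sup. -/
theorem build {k : Ordinal.{u}} {κ : Cardinal.{u}} (hk : k.cof = κ) (hκ : ℵ₀ < κ)
    (next : Ordinal.{u} → Ordinal.{u})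
    (hlt : ∀ b < k, b < next b) (hnk : ∀ b < k, next b < k) {a : Ordinal.{u}} (ha : a < k) :
    ∃ x, a < x ∧ x < k ∧ x.cof = ℵ₀ ∧ Order.IsSuccLimit x ∧
      ∃ s : ℕ → Ordinal.{u}, s 0 = a ∧ (∀ n, s (n+1) = next (s n)) ∧ (∀ n, s n < x) ∧
        (∀ n, s n < k) ∧ ∀ b < x, ∃ m, b < s m := by
  classical
  set s : ℕ → Ordinal.{u} := fun n => Nat.rec a (fun _ ih => next ih) n with hs
  have hs0 : s 0 = a := rfl
  have hssucc : ∀ n, s (n+1) = next (s n) := fun n => rfl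
  have hsk : ∀ n, s n < k := by
    intro n; induction n with
    | zero => exact ha
    | succ m ih => rw [hssucc]; exact hnk _ ih
  have hmono : ∀ n, s n < s (n+1) := fun n => by rw [hssucc]; exact hlt _ (hsk n)
  set x : Ordinal.{u} := ⨆ n, s n with hx
  have hsx : ∀ n, s n < x := fun n => lt_of_lt_of_le (hmono n) (Ordinal.le_iSup s (n+1))
  have hxk : x < k := by
    apply iSup_lt_ord_lift _ hsk
    rw [hk, Cardinal.mk_nat, Cardinal.lift_aleph0]; exact hκ
  have hbx : ∀ b < x, ∃ m, b < s m := fun b hb => Ordinal.lt_iSup_iff.1 hb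
  have hxlim : Order.IsSuccLimit x := by
    rw [Ordinal.isSuccLimit_iff, Order.isSuccPrelimit_iff_succ_lt]
    refine ⟨?_, ?_⟩
    · intro h0; exact (not_lt_zero (a := a)) (h0 ▸ hsx 0)
    · intro b hb
      obtain ⟨m, hm⟩ := hbx b hb
      exact lt_of_le_of_lt (Order.succ_le_of_lt hm) (hsx m)
  have hcof : x.cof = ℵ₀ := by
    apply le_antisymm
    · have := Ordinal.cof_iSup_le_lift (f := s) hsx
      rwa [Cardinal.mk_nat, Cardinal.lift_aleph0] at this
    · exact Ordinal.aleph0_le_cof.2 hxlim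
  exact ⟨x, hsx 0, hxk, hcof, hxlim, s, hs0, hssucc, hsx, hsk, hbx⟩

theorem exists_lim_mem_iInter {k : Ordinal.{u}} {κ : Cardinal.{u}} (hk : k.cof = κ)
    (hκ : ℵ₀ < κ) {ι : Type u} (hι : #ι < κ) (C : ι → Set Ordinal.{u})
    (hC : ∀ i, Club k (C i)) {a : Ordinal.{u}} (ha : a < k) :
    ∃ x, a < x ∧ x < k ∧ x.cof = ℵ₀ ∧ ∀ i, x ∈ C i := by
  have hklim : Order.IsSuccLimit k := Ordinal.aleph0_le_cof.1 (by rw [hk]; exact hκ.le)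
  set next : Ordinal.{u} → Ordinal.{u} :=
    fun b => (⨆ i, pick k (C i) b) ⊔ Order.succ b with hnext
  have hlt : ∀ b < k, b < next b := fun b _ =>
    lt_of_lt_of_le (Order.lt_succ b) le_sup_right
  have hnk : ∀ b < k, next b < k := by
    intro b hb
    apply sup_lt_iff.2 ⟨?_, hklim.succ_lt hb⟩
    apply iSup_lt_ord (by rwa [hk]) (fun i => (pick_spec (hC i) hb).2.1)
  have hpick : ∀ b, ∀ i, pick k (C i) b ≤ next b := fun b i =>
    le_trans (Ordinal.le_iSup _ i) le_sup_left
  obtain ⟨x, hax, hxk, hcof, hxlim, s, hs0, hssucc, hsx, hsk, hbx⟩ :=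
    build hk hκ next hlt hnk ha
  refine ⟨x, hax, hxk, hcof, fun i => ?_⟩
  apply (hC i).2 x hxk
  · refine ⟨pick k (C i) (s 0), (pick_spec (hC i) (hsk 0)).1, ?_⟩
    calc pick k (C i) (s 0) ≤ next (s 0) := hpick _ i
    _ = s 1 := (hssucc 0).symm
    _ < x := hsx 1
  · intro b hb
    obtain ⟨m, hm⟩ := hbx b hb
    refine ⟨pick k (C i) (s m), (pick_spec (hC i) (hsk m)).1,
      lt_of_lt_of_le hm (pick_spec (hC i) (hsk m)).2.2, ?_⟩
    calc pick k (C i) (s m) ≤ next (s m) := hpick _ i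
    _ = s (m+1) := (hssucc m).symm
    _ < x := hsx (m+1)

theorem club_iInter {k : Ordinal.{u}} {κ : Cardinal.{u}} (hk : k.cof = κ)
    (hκ : ℵ₀ < κ) {ι : Type u} (hι : #ι < κ) (C : ι → Set Ordinal.{u})
    (hC : ∀ i, Club k (C i)) : Club k (⋂ i, C i) := by
  constructor
  · intro a ha
    obtain ⟨x, hax, hxk, _, hmem⟩ := exists_lim_mem_iInter hk hκ hι C hC ha
    exact ⟨x, mem_iInter.2 hmem, hxk, hax.le⟩
  · intro a ha h1 h2
    refine mem_iInter.2 fun i => (hC i).2 a ha ?_ ?_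
    · obtain ⟨c, hc, hca⟩ := h1; exact ⟨c, mem_iInter.1 hc i, hca⟩
    · intro b hb; obtain ⟨c, hc, h3, h4⟩ := h2 b hb
      exact ⟨c, mem_iInter.1 hc i, h3, h4⟩

theorem club_inter {k : Ordinal.{u}} {κ : Cardinal.{u}} (hk : k.cof = κ) (hκ : ℵ₀ < κ)
    {C D : Set Ordinal.{u}} (hC : Club k C) (hD : Club k D) : Club k (C ∩ D) := by
  have h2 : #(ULift.{u} Bool) < κ := lt_trans (Cardinal.lt_aleph0_of_finite _) hκ
  have := club_iInter hk hκ h2 (fun i => bif i.down then C else D)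
    (fun i => by cases i with | up b => cases b <;> simpa)
  convert this using 1
  ext z; simp only [mem_iInter, mem_inter_iff]
  constructor
  · rintro ⟨h1, h2⟩ i; cases i with | up b => cases b <;> simpa
  · intro h; exact ⟨by simpa using h ⟨true⟩, by simpa using h ⟨false⟩⟩

theorem club_univ {k : Ordinal.{u}} : Club k univ :=
  ⟨fun a ha => ⟨a, trivial, ha, le_rfl⟩, fun a _ _ _ => trivial⟩

theorem club_Ioo {k : Ordinal.{u}} (hklim : Order.IsSuccLimit k) {β : Ordinal.{u}} (hβ : β < k) :
    Club k {x | β < x ∧ x < k} := by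
  constructor
  · intro a ha
    refine ⟨a ⊔ Order.succ β, ⟨?_, ?_⟩, ?_, le_sup_left⟩
    · exact lt_of_lt_of_le (Order.lt_succ β) le_sup_right
    · exact sup_lt_iff.2 ⟨ha, hklim.succ_lt hβ⟩
    · exact sup_lt_iff.2 ⟨ha, hklim.succ_lt hβ⟩
  · rintro a ha ⟨c, ⟨hβc, _⟩, hca⟩ _
    exact ⟨lt_trans hβc hca, ha⟩

theorem stat_mono {k : Ordinal.{u}} {S S' : Set Ordinal.{u}} (h : S ⊆ S')
    (hS : Stat k S) : Stat k S' := fun C hC => by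
  obtain ⟨x, hx1, hx2⟩ := hS C hC; exact ⟨x, h hx1, hx2⟩

theorem stat_nonempty {k : Ordinal.{u}} {S : Set Ordinal.{u}} (hS : Stat k S) : S.Nonempty := by
  obtain ⟨x, hx, -⟩ := hS univ club_univ; exact ⟨x, hx⟩

theorem stat_inter_club {k : Ordinal.{u}} {κ : Cardinal.{u}} (hk : k.cof = κ) (hκ : ℵ₀ < κ)
    {S C : Set Ordinal.{u}} (hS : Stat k S) (hC : Club k C) : Stat k (S ∩ C) := by
  intro D hD
  obtain ⟨x, hx1, hx2, hx3⟩ := hS (C ∩ D) (club_inter hk hκ hC hD)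
  exact ⟨x, ⟨hx1, hx2⟩, hx3⟩

def diagInter (k : Ordinal.{u}) (C : Ordinal.{u} → Set Ordinal.{u}) : Set Ordinal.{u} :=
  {a | a < k ∧ ∀ γ < a, a ∈ C γ}

theorem club_diagInter {κ : Cardinal.{u}} (hreg : κ.IsRegular) (hκ : ℵ₀ < κ)
    (C : Ordinal.{u} → Set Ordinal.{u}) (hC : ∀ γ, Club κ.ord (C γ)) :
    Club κ.ord (diagInter κ.ord C) := by
  have hk : (κ.ord).cof = κ := hreg.cof_eq
  have hklim : Order.IsSuccLimit (κ.ord) := Cardinal.isSuccLimit_ord (hκ.le)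
  constructor
  · intro a ha
    set next : Ordinal.{u} → Ordinal.{u} :=
      fun b => (Ordinal.bsup b (fun γ _ => pick κ.ord (C γ) b)) ⊔ Order.succ b with hnext
    have hlt : ∀ b < κ.ord, b < next b := fun b _ =>
      lt_of_lt_of_le (Order.lt_succ b) le_sup_right
    have hnk : ∀ b < κ.ord, next b < κ.ord := by
      intro b hb
      apply sup_lt_iff.2 ⟨?_, hklim.succ_lt hb⟩
      apply Ordinal.bsup_lt_ord (by rw [hk]; exact Cardinal.lt_ord.1 hb)
        (fun γ hγ => (pick_spec (hC γ) hb).2.1)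
    have hpick : ∀ b, ∀ γ < b, pick κ.ord (C γ) b ≤ next b := fun b γ hγ =>
      le_trans (Ordinal.le_bsup _ γ hγ) le_sup_left
    obtain ⟨x, hax, hxk, hcof, hxlim, s, hs0, hssucc, hsx, hsk, hbx⟩ :=
      build hk hκ next hlt hnk ha
    refine ⟨x, ⟨hxk, fun γ hγx => ?_⟩, hxk, hax.le⟩
    obtain ⟨m, hm⟩ := hbx γ hγx
    apply (hC γ).2 x hxk
    · refine ⟨pick κ.ord (C γ) (s m), (pick_spec (hC γ) (hsk m)).1, ?_⟩
      calc pick κ.ord (C γ) (s m) ≤ next (s m) := hpick _ γ hm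
      _ = s (m+1) := (hssucc m).symm
      _ < x := hsx (m+1)
    · intro b hb
      obtain ⟨m', hm'⟩ := hbx (b ⊔ γ) (sup_lt_iff.2 ⟨hb, hγx⟩)
      have hbm : b < s m' := lt_of_le_of_lt le_sup_left hm'
      have hγm : γ < s m' := lt_of_le_of_lt le_sup_right hm'
      refine ⟨pick κ.ord (C γ) (s m'), (pick_spec (hC γ) (hsk m')).1,
        lt_of_lt_of_le hbm (pick_spec (hC γ) (hsk m')).2.2, ?_⟩
      calc pick κ.ord (C γ) (s m') ≤ next (s m') := hpick _ γ hγm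
      _ = s (m'+1) := (hssucc m').symm
      _ < x := hsx (m'+1)
  · intro a ha h1 h2
    refine ⟨ha, fun γ hγa => ?_⟩
    apply (hC γ).2 a ha
    · obtain ⟨d, hd, h3, h4⟩ := h2 γ hγa
      exact ⟨d, hd.2 γ h3, h4⟩
    · intro b hb
      obtain ⟨d, hd, h3, h4⟩ := h2 (b ⊔ γ) (sup_lt_iff.2 ⟨hb, hγa⟩)
      exact ⟨d, hd.2 γ (lt_of_le_of_lt le_sup_right h3),
        lt_of_le_of_lt le_sup_left h3, h4⟩

theorem fodor {κ : Cardinal.{u}} (hreg : κ.IsRegular) (hκ : ℵ₀ < κ)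
    {S : Set Ordinal.{u}} (hS : Stat κ.ord S) (f : Ordinal.{u} → Ordinal.{u})
    (hf : ∀ a ∈ S, f a < a) : ∃ γ, Stat κ.ord {a | a ∈ S ∧ f a = γ} := by
  by_contra hcon
  push_neg at hcon
  have hcon' : ∀ γ, ∃ C, Club κ.ord C ∧ {a | a ∈ S ∧ f a = γ} ∩ C = ∅ := by
    intro γ
    obtain ⟨C, hC, hne⟩ := by simpa [Stat, not_forall] using hcon γ
    exact ⟨C, hC, not_nonempty_iff_eq_empty.1 hne⟩
  choose C hC hCdisj using hcon'
  obtain ⟨x, hxS, hxk, hxd⟩ := hS (diagInter κ.ord C) (club_diagInter hreg hκ C hC)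
  have hfx : f x < x := hf x hxS
  have : x ∈ {a | a ∈ S ∧ f a = f x} ∩ C (f x) := ⟨⟨hxS, rfl⟩, hxd (f x) hfx⟩
  rw [hCdisj (f x)] at this
  exact this

theorem exists_omega_seq {a : Ordinal.{u}} (ha : a.cof = ℵ₀) :
    ∃ s : ℕ → Ordinal.{u}, (∀ n, s n < a) ∧ ∀ b < a, ∃ n, b ≤ s n := by
  obtain ⟨ι, f, hf, hι⟩ := Ordinal.exists_lsub_cof a
  rw [ha] at hι
  have : Nonempty (ULift.{u} ℕ ≃ ι) := by
    rw [← Cardinal.eq, Cardinal.mk_uLift, Cardinal.mk_nat, Cardinal.lift_aleph0, hι]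
  obtain ⟨e⟩ := this
  refine ⟨fun n => f (e ⟨n⟩), fun n => hf ▸ Ordinal.lt_lsub f (e ⟨n⟩), fun b hb => ?_⟩
  rw [← hf] at hb
  obtain ⟨i, hi⟩ := Ordinal.lt_lsub_iff.1 hb
  refine ⟨(e.symm i).down, ?_⟩
  have : e ⟨(e.symm i).down⟩ = i := by
    have := e.apply_symm_apply i; convert this
  show b ≤ f (e ⟨(e.symm i).down⟩)
  rw [this]; exact hi

/-- The set of ordinals below `κ.ord` of cofinality `ω` is stationary. -/
theorem stat_cof_omega {κ : Cardinal.{u}} (hreg : κ.IsRegular) (hκ : ℵ₀ < κ) :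
    Stat κ.ord {a | a < κ.ord ∧ a.cof = ℵ₀} := by
  intro C hC
  have h1 : #(PUnit.{u+1}) < κ := lt_trans (Cardinal.lt_aleph0_of_finite _) hκ
  have h0 : (0 : Ordinal.{u}) < κ.ord := (Cardinal.isSuccLimit_ord hκ.le).pos
  obtain ⟨x, _, hxk, hcof, hmem⟩ :=
    exists_lim_mem_iInter hreg.cof_eq hκ h1 (fun _ : PUnit => C) (fun _ => hC) h0
  exact ⟨x, ⟨hxk, hcof⟩, hmem PUnit.unit⟩

/-- Enumerate `c.ord.ToType`-many ordinals `< κ.ord` satisfying an unbounded predicate. -/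
theorem exists_strictMono_sat {κ c : Cardinal.{u}} (hreg : κ.IsRegular) (hκ : ℵ₀ < κ)
    (hc : c < κ) (P : Ordinal.{u} → Prop)
    (hP : ∀ β < κ.ord, ∃ γ, β ≤ γ ∧ γ < κ.ord ∧ P γ) :
    ∃ h : c.ord.ToType → Ordinal.{u}, StrictMono h ∧ ∀ i, P (h i) ∧ h i < κ.ord := by
  classical
  have hklim : Order.IsSuccLimit (κ.ord) := Cardinal.isSuccLimit_ord hκ.le
  set cap : Ordinal.{u} → Ordinal.{u} := fun b => if b < κ.ord then b else 0 with hcap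
  have hcapk : ∀ b, cap b < κ.ord := by
    intro b; rw [hcap]; dsimp only; split
    · assumption
    · exact hklim.pos
  set G : ∀ i : c.ord.ToType, (∀ j, j < i → Ordinal.{u}) → Ordinal.{u} := fun i IH =>
    Classical.choose (hP (cap (Order.succ (⨆ j : {j // j < i}, IH j.1 j.2))) (hcapk _))
    with hG
  set h : c.ord.ToType → Ordinal.{u} := WellFoundedLT.fix G with hh
  have heq : ∀ i, h i = G i (fun j _ => h j) := fun i => by
    rw [hh]; exact WellFoundedLT.fix_eq G i
  have hspec : ∀ i, cap (Order.succ (⨆ j : {j // j < i}, h j.1)) ≤ h i ∧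
      h i < κ.ord ∧ P (h i) := by
    intro i
    rw [heq i]
    exact Classical.choose_spec (hP (cap (Order.succ (⨆ j : {j // j < i}, h j.1))) (hcapk _))
  have hsupk : ∀ i : c.ord.ToType, Order.succ (⨆ j : {j // j < i}, h j.1) < κ.ord := by
    intro i
    apply hklim.succ_lt
    refine iSup_lt_ord (f := fun j : {j // j < i} => h j.1) ?_ (fun j => (hspec j.1).2.1)
    rw [hreg.cof_eq]
    exact lt_of_le_of_lt (le_trans (Cardinal.mk_subtype_le _)
      (by rw [Cardinal.mk_toType, Cardinal.card_ord])) hc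
  have hmono : StrictMono h := by
    intro j i hji
    have h1 : h j ≤ ⨆ j' : {j' // j' < i}, h j'.1 := Ordinal.le_iSup _ (⟨j, hji⟩ : {j' // j' < i})
    have h2 := (hspec i).1
    rw [hcap] at h2; dsimp only at h2
    rw [if_pos (hsupk i)] at h2
    exact lt_of_le_of_lt h1 (lt_of_lt_of_le (Order.lt_succ _) h2)
  exact ⟨h, hmono, fun i => ⟨(hspec i).2.2, (hspec i).2.1⟩⟩

theorem main_ord {κ δ : Cardinal.{u}} (hreg : κ.IsRegular) (hκ : ℵ₀ < κ)
    (hδ : Order.succ δ < κ) :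
    ∃ F' : (Order.succ δ).ord.ToType → Set Ordinal.{u},
      (∀ i, Stat κ.ord (F' i) ∧ F' i ⊆ {a | a < κ.ord ∧ a.cof = ℵ₀}) ∧
      Pairwise (Function.onFun Disjoint F') ∧
      (⋃ i, F' i) = {a | a < κ.ord ∧ a.cof = ℵ₀} := by
  classical
  set S0 : Set Ordinal.{u} := {a | a < κ.ord ∧ a.cof = ℵ₀} with hS0def
  have hS0 : Stat κ.ord S0 := stat_cof_omega hreg hκ
  have hseq : ∀ a, a ∈ S0 → ∃ s : ℕ → Ordinal.{u}, (∀ n, s n < a) ∧ ∀ b < a, ∃ n, b ≤ s n :=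
    fun a ha => exists_omega_seq ha.2
  choose! s hs1 hs2 using hseq
  -- Claim: some coordinate of the chosen sequences is stationarily large
  have claim : ∃ n : ℕ, ∀ β < κ.ord, Stat κ.ord {a | a ∈ S0 ∧ β ≤ s a n} := by
    by_contra hcon
    push_neg at hcon
    have hcon' : ∀ n : ℕ, ∃ β, β < κ.ord ∧ ∃ C, Club κ.ord C ∧
        {a | a ∈ S0 ∧ β ≤ s a n} ∩ C = ∅ := by
      intro n
      obtain ⟨β, hβ, hns⟩ := hcon n
      obtain ⟨C, hC, hne⟩ := by simpa [Stat, not_forall] using hns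
      exact ⟨β, hβ, C, hC, not_nonempty_iff_eq_empty.1 hne⟩
    choose β hβk C hC hdisj using hcon'
    set B : Ordinal.{u} := ⨆ m, β m with hB
    have hBk : B < κ.ord :=
      iSup_lt_ord_lift (by rw [hreg.cof_eq, Cardinal.mk_nat, Cardinal.lift_aleph0]; exact hκ) hβk
    have hβB : ∀ m, β m ≤ B := Ordinal.le_iSup β
    set fam : Option (ULift.{u} ℕ) → Set Ordinal.{u} := fun o =>
      match o with
      | none => {x | B < x ∧ x < κ.ord}
      | some m => C m.down
    have hfam : ∀ o, Club κ.ord (fam o) := by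
      rintro (_ | m)
      · exact club_Ioo (Cardinal.isSuccLimit_ord hκ.le) hBk
      · exact hC m.down
    have hcount : #(Option (ULift.{u} ℕ)) < κ := lt_of_le_of_lt Cardinal.mk_le_aleph0 hκ
    obtain ⟨x, hxS0, hxI⟩ := hS0 (⋂ o, fam o) (club_iInter hreg.cof_eq hκ hcount fam hfam)
    rw [mem_iInter] at hxI
    have hBx : B < x := (hxI none).1
    have hsmall : ∀ m : ℕ, s x m < β m := by
      intro m
      by_contra hge
      push_neg at hge
      have hxm : x ∈ {a | a ∈ S0 ∧ β m ≤ s a m} ∩ C m := ⟨⟨hxS0, hge⟩, hxI (some ⟨m⟩)⟩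
      rw [hdisj m] at hxm
      exact hxm
    have hxlim : Order.IsSuccLimit x := Ordinal.aleph0_le_cof.1 (le_of_eq hxS0.2.symm)
    obtain ⟨m, hm⟩ := hs2 x hxS0 (Order.succ B) (hxlim.succ_lt hBx)
    have hBB : B < B :=
      lt_of_lt_of_le (lt_of_lt_of_le (Order.succ_le_iff.mp hm) (hsmall m).le) (hβB m)
    exact lt_irrefl B hBB
  obtain ⟨n, hstatn⟩ := claim
  -- stationary fibers exist cofinally, via Fodor
  have hfib : ∀ β < κ.ord, ∃ γ, β ≤ γ ∧ γ < κ.ord ∧ Stat κ.ord {a | a ∈ S0 ∧ s a n = γ} := by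
    intro β hβ
    obtain ⟨γ, hγ⟩ := fodor hreg hκ (hstatn β hβ) (fun a => s a n)
      (fun a ha => hs1 a ha.1 n)
    obtain ⟨a0, ⟨ha0S, ha0β⟩, ha0γ⟩ := stat_nonempty hγ
    refine ⟨γ, ha0γ ▸ ha0β, ha0γ ▸ lt_trans (hs1 a0 ha0S n) ha0S.1, stat_mono ?_ hγ⟩
    rintro a ⟨⟨haS, -⟩, hae⟩
    exact ⟨haS, hae⟩
  obtain ⟨h, hmono, hsat⟩ := exists_strictMono_sat hreg hκ hδ
    (fun γ => Stat κ.ord {a | a ∈ S0 ∧ s a n = γ}) hfib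
  have hinj : Function.Injective h := hmono.injective
  have hne : Nonempty ((Order.succ δ).ord.ToType) := by
    rw [Ordinal.nonempty_toType_iff]
    simp only [ne_eq, Cardinal.ord_eq_zero]
    exact ne_of_gt (lt_of_le_of_lt (zero_le (a := δ)) (Order.lt_succ δ))
  obtain ⟨i₀⟩ := hne
  set T : Ordinal.{u} → Set Ordinal.{u} := fun γ => {a | a ∈ S0 ∧ s a n = γ} with hT
  set U : Set Ordinal.{u} := {a | ∃ j, j ≠ i₀ ∧ a ∈ T (h j)} with hU
  set F' : (Order.succ δ).ord.ToType → Set Ordinal.{u} := fun i =>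
    if i = i₀ then S0 \ U else T (h i) with hF'
  have hF'pos : F' i₀ = S0 \ U := if_pos rfl
  have hF'neg : ∀ i, i ≠ i₀ → F' i = T (h i) := fun i hi => if_neg hi
  have hTsub : ∀ γ, T γ ⊆ S0 := fun γ a ha => ha.1
  have hTdisj : ∀ i j, i ≠ j → ∀ a, a ∈ T (h i) → a ∉ T (h j) := by
    intro i j hij a hai haj
    exact hij (hinj (hai.2 ▸ haj.2 ▸ rfl))
  have hmem_i₀ : T (h i₀) ⊆ F' i₀ := by
    rw [hF'pos]
    intro a ha
    refine ⟨ha.1, ?_⟩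
    rintro ⟨j, hj, haj⟩
    exact hTdisj i₀ j (fun e => hj e.symm) a ha haj
  refine ⟨F', fun i => ⟨?_, ?_⟩, ?_, ?_⟩
  · by_cases hi : i = i₀
    · rw [hi]
      exact stat_mono hmem_i₀ (hi ▸ (hsat i).1)
    · rw [hF'neg i hi]; exact (hsat i).1
  · by_cases hi : i = i₀
    · rw [hi, hF'pos]; exact fun a ha => ha.1
    · rw [hF'neg i hi]; exact hTsub (h i)
  · intro i j hij
    rw [Function.onFun, Set.disjoint_left]
    intro a hai haj
    by_cases hi : i = i₀
    · have hj : j ≠ i₀ := fun e => hij (hi.trans e.symm)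
      rw [hi, hF'pos] at hai
      rw [hF'neg j hj] at haj
      exact hai.2 ⟨j, hj, haj⟩
    · by_cases hj : j = i₀
      · rw [hj, hF'pos] at haj
        rw [hF'neg i hi] at hai
        exact haj.2 ⟨i, hi, hai⟩
      · rw [hF'neg i hi] at hai
        rw [hF'neg j hj] at haj
        exact hTdisj i j hij a hai haj
  · apply Set.eq_of_subset_of_subset
    · apply iUnion_subset
      intro i a ha
      by_cases hi : i = i₀
      · rw [hi, hF'pos] at ha; exact ha.1
      · rw [hF'neg i hi] at ha; exact hTsub (h i) ha
    · intro a ha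
      by_cases hmem : ∃ j, j ≠ i₀ ∧ a ∈ T (h j)
      · obtain ⟨j, hj, haj⟩ := hmem
        exact mem_iUnion.2 ⟨j, by rw [hF'neg j hj]; exact haj⟩
      · refine mem_iUnion.2 ⟨i₀, ?_⟩
        rw [hF'pos]
        exact ⟨ha, hmem⟩

end SolovayAux

/-- The cofinality of (the ordinal corresponding to) an element of `o.ToType`. -/
noncomputable def cofAt {o : Ordinal} (a : o.ToType) : Cardinal := (ordAt a).cof

/-- Club subsets of (the canonical type of order type) `o`: unbounded sets
containing all of their limit points. -/
def OClub {o : Ordinal} (C : Set o.ToType) : Prop :=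
  (∀ a, ∃ c ∈ C, a ≤ c) ∧
  ∀ a : o.ToType, (∃ c ∈ C, c < a) → (∀ b < a, ∃ c ∈ C, b < c ∧ c < a) → a ∈ C

/-- Stationary subsets of (the canonical type of order type) `o`. -/
def OStat {o : Ordinal} (S : Set o.ToType) : Prop :=
  ∀ C, OClub C → (S ∩ C).Nonempty

/-- `c` is a club subset of (the initial segment below) the element `a`. -/
def ClubBelow {o : Ordinal} (c : Set o.ToType) (a : o.ToType) : Prop :=
  c ⊆ Set.Iio a ∧ (∀ b < a, ∃ x ∈ c, b ≤ x) ∧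
  ∀ x < a, (∃ y ∈ c, y < x) → (∀ b < x, ∃ y ∈ c, b < y ∧ y < x) → x ∈ c

namespace SolovayAux

theorem ordAt_lt {o : Ordinal.{u}} (x : o.ToType) : ordAt x < o :=
  ((Ordinal.ToType.mk (o := o)).symm x).2

theorem ordAt_lt_iff {o : Ordinal.{u}} {x y : o.ToType} : ordAt x < ordAt y ↔ x < y :=
  Subtype.coe_lt_coe.trans (OrderIso.lt_iff_lt _)

theorem ordAt_le_iff {o : Ordinal.{u}} {x y : o.ToType} : ordAt x ≤ ordAt y ↔ x ≤ y :=
  Subtype.coe_le_coe.trans (OrderIso.le_iff_le _)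

theorem ordAt_enum {o : Ordinal.{u}} (a : Ordinal.{u}) (h : a < o) :
    ordAt ((Ordinal.ToType.mk (o := o)) ⟨a, h⟩) = a := by
  unfold ordAt
  rw [OrderIso.symm_apply_apply]

theorem club_image {o : Ordinal.{u}} {C : Set o.ToType} (hC : OClub C) :
    Club o (ordAt '' C) := by
  constructor
  · intro a ha
    obtain ⟨c, hc, hxc⟩ := hC.1 ((Ordinal.ToType.mk (o := o)) ⟨a, ha⟩)
    refine ⟨ordAt c, ⟨c, hc, rfl⟩, ordAt_lt c, ?_⟩
    have := ordAt_le_iff.2 hxc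
    rwa [ordAt_enum a ha] at this
  · intro a ha h1 h2
    set x := (Ordinal.ToType.mk (o := o)) ⟨a, ha⟩ with hx
    have hax : ordAt x = a := ordAt_enum a ha
    have hxC : x ∈ C := by
      apply hC.2 x
      · obtain ⟨c', ⟨c, hc, rfl⟩, hlt⟩ := h1
        exact ⟨c, hc, ordAt_lt_iff.1 (hax ▸ hlt)⟩
      · intro y hy
        obtain ⟨c', ⟨c, hc, rfl⟩, hlt1, hlt2⟩ := h2 (ordAt y) (hax ▸ ordAt_lt_iff.2 hy)
        exact ⟨c, hc, ordAt_lt_iff.1 hlt1, ordAt_lt_iff.1 (hax ▸ hlt2)⟩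
    exact ⟨x, hxC, hax⟩

theorem ostat_of_stat {o : Ordinal.{u}} {S' : Set Ordinal.{u}} (hS : Stat o S') :
    OStat {x : o.ToType | ordAt x ∈ S'} := by
  intro C hC
  obtain ⟨a, haS, ⟨x, hxC, hax⟩⟩ := hS (ordAt '' C) (club_image hC)
  exact ⟨x, by rw [mem_setOf_eq, hax]; exact haS, hxC⟩

end SolovayAux

/-- (Solovay splitting.) Let `κ` be regular uncountable and `δ < κ` a cardinal with
`δ⁺ < κ`. Then `{α < κ : cf(α) = ℵ₀}` can be partitioned into `δ⁺` pairwise disjoint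
stationary subsets of `κ`. -/
theorem stmt18 (κ δ : Cardinal) (hreg : κ.IsRegular) (hunc : ℵ₀ < κ)
    (hδκ : δ < κ) (hδ : Order.succ δ < κ) :
    ∃ F : (Order.succ δ).ord.ToType → Set κ.ord.ToType,
      (∀ i, OStat (F i) ∧ F i ⊆ {a | cofAt a = ℵ₀}) ∧
      Pairwise (Function.onFun Disjoint F) ∧
      (⋃ i, F i) = {a : κ.ord.ToType | cofAt a = ℵ₀} := by
  obtain ⟨F', hF'1, hF'2, hF'3⟩ := SolovayAux.main_ord hreg hunc hδ
  refine ⟨fun i => {x | ordAt x ∈ F' i}, fun i => ⟨?_, ?_⟩, ?_, ?_⟩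
  · exact SolovayAux.ostat_of_stat (hF'1 i).1
  · intro x hx
    exact ((hF'1 i).2 hx).2
  · intro i j hij
    have := hF'2 hij
    rw [Function.onFun, Set.disjoint_left] at this ⊢
    intro x hxi hxj
    exact this hxi hxj
  · ext x
    simp only [mem_iUnion, mem_setOf_eq]
    constructor
    · rintro ⟨i, hi⟩
      have : ordAt x ∈ ⋃ i, F' i := Set.mem_iUnion.2 ⟨i, hi⟩
      rw [hF'3] at this
      exact this.2
    · intro hx
      have : ordAt x ∈ {a | a < κ.ord ∧ a.cof = ℵ₀} := ⟨SolovayAux.ordAt_lt x, hx⟩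
      rw [← hF'3] at this
      exact Set.mem_iUnion.1 this
end
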